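/- arXiv:2401.09948 — 7 statements merged into one kernel-verified Lean document; each statement's English description precedes it below -/
import Mathlib

section
/- Let a, b > 0, λ > 1, R > 1, and define φ(α) = [R^(λ-1)(1 + √(1+α/b²)) / (1 + √(1 + R^(2λ-2)α/b²))]^((1/(λ-1))·(a/b)) for α ≥ -b²/R^(2λ-2). Then φ is strictly decreasing on [-b²/R^(2λ-2), ∞). -/
set_option maxHeartbeats 1000000 in
/-- Key algebraic inequality: for `c > 1` and `-1 ≤ c*p`, `p < q`,
`(1 + √(1+q))*(1 + √(1+c*p)) < (1 + √(1+p))*(1 + √(1+c*q))`. -/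
lemma stmt2_key (c p q : ℝ) (hc : 1 < c) (hp : -1 ≤ c * p) (hpq : p < q) :
    (1 + Real.sqrt (1 + q)) * (1 + Real.sqrt (1 + c * p)) <
      (1 + Real.sqrt (1 + p)) * (1 + Real.sqrt (1 + c * q)) := by
  have hc0 : (0:ℝ) < c := by linarith
  have hq : -1 < c * q := by nlinarith [mul_pos hc0 (sub_pos.mpr hpq)]
  have h1c : 1 / c < 1 := (div_lt_one hc0).mpr hc
  have hpc : -(1 / c) ≤ p := by
    have h : (-1 : ℝ) / c ≤ p := (div_le_iff₀ hc0).mpr (by linarith)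
    rwa [neg_div] at h
  have h1p : 0 < 1 + p := by linarith
  have h1q : 0 < 1 + q := by linarith
  have h1cp : 0 ≤ 1 + c * p := by linarith
  have h1cq : 0 < 1 + c * q := by linarith
  set sp := Real.sqrt (1 + p) with hspdef
  set sQ := Real.sqrt (1 + q) with hsQdef
  set tp := Real.sqrt (1 + c * p) with htpdef
  set tq := Real.sqrt (1 + c * q) with htqdef
  have hsp0 : 0 < sp := Real.sqrt_pos.mpr h1p
  have hsQ0 : 0 < sQ := Real.sqrt_pos.mpr h1q
  have htp0 : 0 ≤ tp := Real.sqrt_nonneg _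
  have htq0 : 0 < tq := Real.sqrt_pos.mpr h1cq
  have hsp2 : sp ^ 2 = 1 + p := Real.sq_sqrt h1p.le
  have hsQ2 : sQ ^ 2 = 1 + q := Real.sq_sqrt h1q.le
  have htp2 : tp ^ 2 = 1 + c * p := Real.sq_sqrt h1cp
  have htq2 : tq ^ 2 = 1 + c * q := Real.sq_sqrt h1cq.le
  -- A : tp * sQ < tq * sp
  have hA : tp * sQ < tq * sp := by
    have h1 : tp * sQ = Real.sqrt ((1 + c * p) * (1 + q)) := by
      rw [Real.sqrt_mul h1cp]
    have h2 : tq * sp = Real.sqrt ((1 + c * q) * (1 + p)) := by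
      rw [Real.sqrt_mul h1cq.le]
    rw [h1, h2]
    apply Real.sqrt_lt_sqrt (by positivity)
    nlinarith [mul_lt_mul_of_pos_left hpq (by linarith : (0:ℝ) < c - 1)]
  -- termwise bounds: t ≤ c * s
  have hcsp : tp ≤ c * sp := by
    have h1 : tp ≤ Real.sqrt (c ^ 2 * (1 + p)) := by
      apply Real.sqrt_le_sqrt
      nlinarith [mul_nonneg (by linarith : (0:ℝ) ≤ c - 1) (by linarith : (0:ℝ) ≤ c * p + 1)]
    rwa [Real.sqrt_mul (sq_nonneg c), Real.sqrt_sq hc0.le] at h1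
  have hcsQ : tq ≤ c * sQ := by
    have h1 : tq ≤ Real.sqrt (c ^ 2 * (1 + q)) := by
      apply Real.sqrt_le_sqrt
      nlinarith [mul_nonneg (by linarith : (0:ℝ) ≤ c - 1) (by linarith : (0:ℝ) ≤ c * q + 1)]
    rwa [Real.sqrt_mul (sq_nonneg c), Real.sqrt_sq hc0.le] at h1
  -- B : sQ - sp ≤ tq - tp
  have hspq : sp ≤ sQ := Real.sqrt_le_sqrt (by linarith)
  have hB : sQ - sp ≤ tq - tp := by
    have e1 : tq ^ 2 - tp ^ 2 = c * (sQ ^ 2 - sp ^ 2) := by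
      rw [htq2, htp2, hsQ2, hsp2]; ring
    have h5 : (sQ - sp) * (tq + tp) ≤ (sQ - sp) * (c * (sQ + sp)) :=
      mul_le_mul_of_nonneg_left (by linarith) (by linarith)
    have h6 : (sQ - sp) * (tq + tp) ≤ (tq - tp) * (tq + tp) := by nlinarith [e1, h5]
    exact le_of_mul_le_mul_right h6 (by linarith)
  nlinarith [hA, hB]

set_option maxHeartbeats 1000000 in
theorem stmt2 (a b lam R : ℝ) (ha : 0 < a) (hb : 0 < b) (hlam : 1 < lam) (hR : 1 < R) :
    StrictAntiOn (fun α : ℝ =>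
        (R ^ (lam - 1) * (1 + Real.sqrt (1 + α / b ^ 2)) /
          (1 + Real.sqrt (1 + R ^ (2 * lam - 2) * α / b ^ 2))) ^ ((1 / (lam - 1)) * (a / b)))
      (Set.Ici (-b ^ 2 / R ^ (2 * lam - 2))) := by
  have hR0 : (0:ℝ) < R := lt_trans one_pos hR
  have hb2 : (0:ℝ) < b ^ 2 := by positivity
  set c := R ^ (2 * lam - 2) with hcdef
  have hc1 : 1 < c := by
    rw [hcdef, show (1:ℝ) = R ^ (0:ℝ) by simp]
    exact (Real.rpow_lt_rpow_left_iff hR).mpr (by linarith)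
  have hc0 : (0:ℝ) < c := by linarith
  have hC : 0 < R ^ (lam - 1) := Real.rpow_pos_of_pos hR0 _
  have hexp : 0 < 1 / (lam - 1) * (a / b) := by
    have h1 : 0 < lam - 1 := by linarith
    positivity
  intro x hx y hy hxy
  simp only [Set.mem_Ici] at hx hy
  simp only
  have hmd : ∀ z : ℝ, c * z / b ^ 2 = c * (z / b ^ 2) := fun z => mul_div_assoc c z _
  rw [hmd x, hmd y]
  set p := x / b ^ 2 with hpdef
  set q := y / b ^ 2 with hqdef
  have hcp : -1 ≤ c * p := by
    rw [hpdef, ← mul_div_assoc, le_div_iff₀ hb2]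
    rw [div_le_iff₀ hc0] at hx
    nlinarith
  have hpq : p < q := by
    rw [hpdef, hqdef]
    gcongr
  have key := stmt2_key c p q hc1 hcp hpq
  -- positivity facts for the bases
  have hcq : -1 < c * q := by nlinarith [mul_pos hc0 (sub_pos.mpr hpq)]
  have h1c : 1 / c < 1 := (div_lt_one hc0).mpr hc1
  have hpc : -(1 / c) ≤ p := by
    have h : (-1 : ℝ) / c ≤ p := (div_le_iff₀ hc0).mpr (by linarith)
    rwa [neg_div] at h
  have h1p : 0 < 1 + p := by linarith
  have h1q : 0 < 1 + q := by linarith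
  have hsp0 : 0 ≤ Real.sqrt (1 + p) := Real.sqrt_nonneg _
  have hsq0 : 0 ≤ Real.sqrt (1 + q) := Real.sqrt_nonneg _
  have htp0 : 0 ≤ Real.sqrt (1 + c * p) := Real.sqrt_nonneg _
  have htq0 : 0 ≤ Real.sqrt (1 + c * q) := Real.sqrt_nonneg _
  apply Real.rpow_lt_rpow (by positivity) _ hexp
  rw [div_lt_div_iff₀ (by linarith) (by linarith)]
  nlinarith [mul_lt_mul_of_pos_left key hC]
end

section
/- Let a, b > 0, λ > 1, R > 1, and r satisfying 1 < r ≤ (R^(λ-1) + √(R^(2λ-2)-1))^((1/(λ-1))·(a/b)). Then there exists a unique α ≥ -b²/R^(2λ-2) such that [R^(λ-1)(1 + √(1+α/b²)) / (1 + √(1 + R^(2λ-2)α/b²))]^((1/(λ-1))·(a/b)) = r. -/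
set_option maxHeartbeats 1000000

private lemma key_lemma (Rt u1 u2 v1 v2 : ℝ) (hRt : 1 < Rt) (hu1n : 0 ≤ u1) (hu : u1 < u2)
    (hv1n : 0 ≤ v1) (hv2p : 0 < v2)
    (r1 : v1 ^ 2 = Rt ^ 2 * u1 ^ 2 - (Rt ^ 2 - 1))
    (r2 : v2 ^ 2 = Rt ^ 2 * u2 ^ 2 - (Rt ^ 2 - 1)) :
    (1 + u2) * (1 + v1) < (1 + u1) * (1 + v2) := by
  have hu2p : 0 < u2 := lt_of_le_of_lt hu1n hu
  have hvu1 : v1 ≤ Rt * u1 := by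
    have h1 : v1 ^ 2 ≤ (Rt * u1) ^ 2 := by nlinarith
    have h2 : 0 ≤ Rt * u1 := mul_nonneg (by linarith) hu1n
    nlinarith
  have hvu2 : v2 ≤ Rt * u2 := by
    have h1 : v2 ^ 2 ≤ (Rt * u2) ^ 2 := by nlinarith
    have h2 : 0 ≤ Rt * u2 := mul_nonneg (by linarith) hu2p.le
    nlinarith
  have hB : u2 * v1 < u1 * v2 := by
    have hsq : (u2 * v1) ^ 2 < (u1 * v2) ^ 2 := by
      have hc : (u1 * v2) ^ 2 - (u2 * v1) ^ 2 = (Rt ^ 2 - 1) * (u2 ^ 2 - u1 ^ 2) := by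
        linear_combination u1 ^ 2 * r2 - u2 ^ 2 * r1
      have h8 : 0 < (Rt ^ 2 - 1) * (u2 ^ 2 - u1 ^ 2) :=
        mul_pos (by nlinarith) (by nlinarith)
      linarith
    exact lt_of_pow_lt_pow_left₀ 2 (mul_nonneg hu1n hv2p.le) hsq
  have hv12 : 0 < v1 + v2 := by linarith
  have h5 : (v2 - v1) * (v1 + v2) = Rt ^ 2 * (u2 - u1) * (u1 + u2) := by
    linear_combination r2 - r1
  have h6 : v1 + v2 ≤ Rt ^ 2 * (u1 + u2) := by nlinarith
  have h7 : (u2 - u1) * (v1 + v2) ≤ (v2 - v1) * (v1 + v2) := by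
    calc (u2 - u1) * (v1 + v2) ≤ (u2 - u1) * (Rt ^ 2 * (u1 + u2)) :=
          mul_le_mul_of_nonneg_left h6 (by linarith)
      _ = (v2 - v1) * (v1 + v2) := by linear_combination -h5
  have hA : u2 - u1 ≤ v2 - v1 := le_of_mul_le_mul_right h7 hv12
  nlinarith

private lemma bound_lemma (Rt s u v : ℝ) (hRt : 1 < Rt) (hs : 1 < s) (hu1 : 1 ≤ u)
    (huRt : Rt / 2 ≤ u) (hsu : 1 ≤ u * (s - 1)) (hvn : 0 ≤ v)
    (hv2 : v ^ 2 = Rt ^ 2 * u ^ 2 - (Rt ^ 2 - 1)) :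
    Rt * (1 + u) ≤ s * (1 + v) := by
  have hvge : Rt * u - 1 ≤ v := by
    have h2 : (Rt * u - 1) ^ 2 ≤ v ^ 2 := by
      nlinarith [mul_nonneg (by linarith : (0:ℝ) ≤ Rt) (by linarith : (0:ℝ) ≤ 2 * u - Rt)]
    exact le_of_pow_le_pow_left₀ (two_ne_zero) hvn h2
  have h3 : Rt * u ≤ 1 + v := by linarith
  nlinarith [mul_le_mul_of_nonneg_left h3 (by linarith : (0:ℝ) ≤ s),
    mul_nonneg (by linarith : (0:ℝ) ≤ Rt) (by linarith : (0:ℝ) ≤ u * (s - 1) - 1)]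

theorem stmt4 (a b lam R r : ℝ) (ha : 0 < a) (hb : 0 < b) (hlam : 1 < lam) (hR : 1 < R)
    (hr : 1 < r)
    (hrle : r ≤ (R ^ (lam - 1) + Real.sqrt (R ^ (2 * lam - 2) - 1)) ^ ((1 / (lam - 1)) * (a / b))) :
    ∃! α : ℝ, -b ^ 2 / R ^ (2 * lam - 2) ≤ α ∧
      (R ^ (lam - 1) * (1 + Real.sqrt (1 + α / b ^ 2)) /
        (1 + Real.sqrt (1 + R ^ (2 * lam - 2) * α / b ^ 2))) ^ ((1 / (lam - 1)) * (a / b)) = r := by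
  have hR0 : (0:ℝ) < R := lt_trans one_pos hR
  have hr0 : (0:ℝ) < r := lt_trans one_pos hr
  set p : ℝ := (1 / (lam - 1)) * (a / b) with hp_def
  have hp : 0 < p := by
    apply mul_pos
    · rw [one_div]; exact inv_pos.mpr (by linarith)
    · exact div_pos ha hb
  set Rt : ℝ := R ^ (lam - 1) with hRt_def
  have hRt : 1 < Rt := (Real.one_lt_rpow_iff_of_pos hR0).mpr (Or.inl ⟨hR, by linarith⟩)
  have hRt0 : (0:ℝ) < Rt := by linarith
  have hR2 : R ^ (2 * lam - 2) = Rt ^ 2 := by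
    rw [hRt_def, ← Real.rpow_natCast (R ^ (lam - 1)) 2, ← Real.rpow_mul hR0.le]
    norm_num
    ring_nf
  rw [hR2] at hrle ⊢
  have hb2 : (0:ℝ) < b ^ 2 := by positivity
  have hRt2 : (1:ℝ) < Rt ^ 2 := by nlinarith
  set α0 : ℝ := -b ^ 2 / Rt ^ 2 with hα0_def
  have hα0neg : α0 < 0 := div_neg_of_neg_of_pos (by nlinarith) (by nlinarith)
  set G : ℝ → ℝ := fun α => Rt * (1 + Real.sqrt (1 + α / b ^ 2)) /
      (1 + Real.sqrt (1 + Rt ^ 2 * α / b ^ 2)) with hG_def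
  have hdenom : ∀ α : ℝ, 0 < 1 + Real.sqrt (1 + Rt ^ 2 * α / b ^ 2) := fun α => by
    have := Real.sqrt_nonneg (1 + Rt ^ 2 * α / b ^ 2); linarith
  have hGpos : ∀ α : ℝ, 0 < G α := fun α => by
    have h1 := Real.sqrt_nonneg (1 + α / b ^ 2)
    exact div_pos (mul_pos hRt0 (by linarith)) (hdenom α)
  have hGcont : Continuous G := by
    apply Continuous.div
    · continuity
    · continuity
    · intro x; exact ne_of_gt (hdenom x)
  have hinner1 : ∀ α, α0 ≤ α → 0 ≤ 1 + α / b ^ 2 := by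
    intro α hα
    have h1 : α0 * Rt ^ 2 = -b ^ 2 := by rw [hα0_def]; field_simp
    have h2 : -b ^ 2 ≤ α := by nlinarith
    have h3 : (0:ℝ) ≤ (b ^ 2 + α) / b ^ 2 := div_nonneg (by linarith) hb2.le
    calc (0:ℝ) ≤ (b ^ 2 + α) / b ^ 2 := h3
      _ = 1 + α / b ^ 2 := by field_simp
  have hinner2 : ∀ α, α0 ≤ α → 0 ≤ 1 + Rt ^ 2 * α / b ^ 2 := by
    intro α hα
    have h1 : 1 + Rt ^ 2 * α0 / b ^ 2 = 0 := by rw [hα0_def]; field_simp; ring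
    have h2 : Rt ^ 2 * α0 / b ^ 2 ≤ Rt ^ 2 * α / b ^ 2 := by
      have h3 : Rt ^ 2 * α0 ≤ Rt ^ 2 * α := by nlinarith
      exact div_le_div_of_nonneg_right h3 hb2.le
    linarith
  -- strict antitonicity on [α0, ∞)
  have hanti : ∀ x y, α0 ≤ x → x < y → G y < G x := by
    intro x y hx hxy
    have hy : α0 ≤ y := le_of_lt (lt_of_le_of_lt hx hxy)
    set u1 := Real.sqrt (1 + x / b ^ 2) with hu1d
    set u2 := Real.sqrt (1 + y / b ^ 2) with hu2d
    set v1 := Real.sqrt (1 + Rt ^ 2 * x / b ^ 2) with hv1d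
    set v2 := Real.sqrt (1 + Rt ^ 2 * y / b ^ 2) with hv2d
    have h1 : 0 ≤ 1 + x / b ^ 2 := hinner1 x hx
    have h2 : 0 ≤ 1 + y / b ^ 2 := hinner1 y hy
    have h3 : 0 ≤ 1 + Rt ^ 2 * x / b ^ 2 := hinner2 x hx
    have h4 : 0 ≤ 1 + Rt ^ 2 * y / b ^ 2 := hinner2 y hy
    have hxy2 : Rt ^ 2 * x < Rt ^ 2 * y := by nlinarith
    have hxb : x / b ^ 2 < y / b ^ 2 := div_lt_div_of_pos_right hxy hb2
    have hxb2 : Rt ^ 2 * x / b ^ 2 < Rt ^ 2 * y / b ^ 2 := div_lt_div_of_pos_right hxy2 hb2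
    have hu : u1 < u2 := Real.sqrt_lt_sqrt h1 (by linarith)
    have hu1n : 0 ≤ u1 := Real.sqrt_nonneg _
    have hv1n : 0 ≤ v1 := Real.sqrt_nonneg _
    have hv2p : 0 < v2 := Real.sqrt_pos.mpr (by linarith)
    have su1 : u1 ^ 2 = 1 + x / b ^ 2 := Real.sq_sqrt h1
    have su2 : u2 ^ 2 = 1 + y / b ^ 2 := Real.sq_sqrt h2
    have sv1 : v1 ^ 2 = 1 + Rt ^ 2 * x / b ^ 2 := Real.sq_sqrt h3
    have sv2 : v2 ^ 2 = 1 + Rt ^ 2 * y / b ^ 2 := Real.sq_sqrt h4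
    have r1 : v1 ^ 2 = Rt ^ 2 * u1 ^ 2 - (Rt ^ 2 - 1) := by
      rw [sv1, su1]; field_simp; ring
    have r2 : v2 ^ 2 = Rt ^ 2 * u2 ^ 2 - (Rt ^ 2 - 1) := by
      rw [sv2, su2]; field_simp; ring
    have key := key_lemma Rt u1 u2 v1 v2 hRt hu1n hu hv1n hv2p r1 r2
    show Rt * (1 + u2) / (1 + v2) < Rt * (1 + u1) / (1 + v1)
    rw [div_lt_div_iff₀ (by linarith) (by linarith)]
    calc Rt * (1 + u2) * (1 + v1) = Rt * ((1 + u2) * (1 + v1)) := by ring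
      _ < Rt * ((1 + u1) * (1 + v2)) := mul_lt_mul_of_pos_left key hRt0
      _ = Rt * (1 + u1) * (1 + v2) := by ring
  -- value at α0
  have hGα0 : G α0 = Rt + Real.sqrt (Rt ^ 2 - 1) := by
    have e1 : 1 + Rt ^ 2 * α0 / b ^ 2 = 0 := by rw [hα0_def]; field_simp; ring
    have e2 : 1 + α0 / b ^ 2 = (Rt ^ 2 - 1) / Rt ^ 2 := by
      rw [hα0_def]; field_simp; ring
    have e3 : Real.sqrt ((Rt ^ 2 - 1) / Rt ^ 2) = Real.sqrt (Rt ^ 2 - 1) / Rt := by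
      rw [Real.sqrt_div (by nlinarith : (0:ℝ) ≤ Rt ^ 2 - 1), Real.sqrt_sq hRt0.le]
    show Rt * (1 + Real.sqrt (1 + α0 / b ^ 2)) / (1 + Real.sqrt (1 + Rt ^ 2 * α0 / b ^ 2))
        = Rt + Real.sqrt (Rt ^ 2 - 1)
    rw [e1, e2, e3, Real.sqrt_zero]
    field_simp
    ring
  -- the target value s
  set s : ℝ := r ^ p⁻¹ with hs_def
  have hs1 : 1 < s := (Real.one_lt_rpow_iff_of_pos hr0).mpr (Or.inl ⟨hr, by positivity⟩)
  have hK0 : (0:ℝ) < Rt + Real.sqrt (Rt ^ 2 - 1) := by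
    have := Real.sqrt_nonneg (Rt ^ 2 - 1); linarith
  have hsle : s ≤ Rt + Real.sqrt (Rt ^ 2 - 1) := by
    have h1 : s ≤ ((Rt + Real.sqrt (Rt ^ 2 - 1)) ^ p) ^ p⁻¹ :=
      Real.rpow_le_rpow hr0.le hrle (by positivity)
    calc s ≤ ((Rt + Real.sqrt (Rt ^ 2 - 1)) ^ p) ^ p⁻¹ := h1
      _ = (Rt + Real.sqrt (Rt ^ 2 - 1)) ^ (p * p⁻¹) := (Real.rpow_mul hK0.le p p⁻¹).symm
      _ = Rt + Real.sqrt (Rt ^ 2 - 1) := by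
          rw [mul_inv_cancel₀ hp.ne', Real.rpow_one]
  -- choice of a far-out point α1 with G α1 ≤ s
  set u : ℝ := max (Rt / 2) (1 / (s - 1)) + 1 with hu_def
  have hu1 : 1 ≤ u := by
    rw [hu_def]
    have h0 : (0:ℝ) ≤ max (Rt / 2) (1 / (s - 1)) :=
      le_trans (by linarith : (0:ℝ) ≤ Rt / 2) (le_max_left _ _)
    linarith
  have huRt : Rt / 2 ≤ u := by
    have := le_max_left (Rt / 2) (1 / (s - 1)); linarith
  have hus : 1 / (s - 1) ≤ u := by
    have := le_max_right (Rt / 2) (1 / (s - 1)); linarith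
  have hsu : 1 ≤ u * (s - 1) := by
    have h1 := (div_le_iff₀ (by linarith : (0:ℝ) < s - 1)).mp hus
    linarith
  have hu2 : 1 ≤ u ^ 2 := by nlinarith
  set α1 : ℝ := b ^ 2 * (u ^ 2 - 1) with hα1_def
  have hα1nn : 0 ≤ α1 := mul_nonneg hb2.le (by linarith)
  have hα01 : α0 ≤ α1 := by linarith
  have f1 : 1 + α1 / b ^ 2 = u ^ 2 := by rw [hα1_def]; field_simp; ring
  have f2 : 1 + Rt ^ 2 * α1 / b ^ 2 = Rt ^ 2 * u ^ 2 - (Rt ^ 2 - 1) := by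
    rw [hα1_def]; field_simp; ring
  set v : ℝ := Real.sqrt (Rt ^ 2 * u ^ 2 - (Rt ^ 2 - 1)) with hv_def
  have hw0 : 0 ≤ Rt ^ 2 * u ^ 2 - (Rt ^ 2 - 1) := by
    nlinarith [mul_nonneg (sq_nonneg Rt) (by linarith : (0:ℝ) ≤ u ^ 2 - 1)]
  have hvn : 0 ≤ v := Real.sqrt_nonneg _
  have hv2 : v ^ 2 = Rt ^ 2 * u ^ 2 - (Rt ^ 2 - 1) := Real.sq_sqrt hw0
  have hGα1 : G α1 ≤ s := by
    show Rt * (1 + Real.sqrt (1 + α1 / b ^ 2)) / (1 + Real.sqrt (1 + Rt ^ 2 * α1 / b ^ 2)) ≤ s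
    rw [f1, f2, Real.sqrt_sq (by linarith : (0:ℝ) ≤ u)]
    rw [div_le_iff₀ (by rw [← hv_def]; linarith)]
    rw [← hv_def]
    have := bound_lemma Rt s u v hRt hs1 hu1 huRt hsu hvn hv2
    linarith
  -- intermediate value theorem
  have hmem : s ∈ Set.Icc (G α1) (G α0) := ⟨hGα1, by rw [hGα0]; exact hsle⟩
  obtain ⟨α, hαmem, hGα⟩ := intermediate_value_Icc' hα01 hGcont.continuousOn hmem
  have hαdom : α0 ≤ α := hαmem.1
  -- conversion between the two equations
  have hconv : ∀ β : ℝ, (G β) ^ p = r ↔ G β = s := by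
    intro β
    constructor
    · intro h
      have h2 : ((G β) ^ p) ^ p⁻¹ = G β := by
        rw [← Real.rpow_mul (hGpos β).le, mul_inv_cancel₀ hp.ne', Real.rpow_one]
      rw [← h2, h, hs_def]
    · intro h
      rw [h, hs_def, ← Real.rpow_mul hr0.le, inv_mul_cancel₀ hp.ne', Real.rpow_one]
  refine ⟨α, ⟨hαdom, ?_⟩, ?_⟩
  · exact (hconv α).mpr hGα
  · rintro β ⟨hβdom, hβeq⟩
    have hGβ : G β = s := (hconv β).mp hβeq
    rcases lt_trichotomy β α with h | h | h
    · exfalso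
      have h9 := hanti β α hβdom h
      rw [hGα, hGβ] at h9
      exact lt_irrefl s h9
    · exact h
    · exfalso
      have h9 := hanti α β hαdom h
      rw [hGα, hGβ] at h9
      exact lt_irrefl s h9
end

section
/- Let a, b > 0, λ > 1, R > 1, α = -b²/R^(2λ-2). Then exp((a/((1-λ)b)) · ∫ from 1 to R of d(b/s^(λ-1))/√((b/s^(λ-1))² + α)) = (R^(λ-1) + √(R^(2(λ-1)) - 1))^((1/(λ-1))·(a/b)). Equivalently, ∫ from 1 to R of a/√(α s^(2λ) + b² s²) ds = (a/((λ-1)b)) · log(R^(λ-1) + √(R^(2(λ-1)) - 1)). -/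
open MeasureTheory

set_option maxHeartbeats 1000000 in
theorem stmt5 (a b lam R α : ℝ) (ha : 0 < a) (hb : 0 < b) (hlam : 1 < lam) (hR : 1 < R)
    (hα : α = -b ^ 2 / R ^ (2 * lam - 2)) :
    ∫ s in (1:ℝ)..R, a / Real.sqrt (α * s ^ (2 * lam) + b ^ 2 * s ^ 2)
      = (a / ((lam - 1) * b)) * Real.log (R ^ (lam - 1) + Real.sqrt (R ^ (2 * (lam - 1)) - 1)) := by
  have hR0 : (0:ℝ) < R := lt_trans one_pos hR
  set m : ℝ := lam - 1 with hmdef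
  have hm : 0 < m := by simp only [hmdef]; linarith
  have hα' : α = -b ^ 2 / R ^ (2 * m) := by
    rw [hα, show (2 * lam - 2 : ℝ) = 2 * m by simp only [hmdef]; ring]
  have hR2m : (0:ℝ) < R ^ (2*m) := Real.rpow_pos_of_pos hR0 _
  -- the function under the sqrt, rewritten
  have hG : ∀ x : ℝ, 0 < x → α * x ^ (2*lam) + b^2 * x^2
      = b^2 * x^2 * (1 - (x/R) ^ (2*m)) := by
    intro x hx
    have hx2l : x ^ (2*lam) = x ^ (2*m) * x ^ 2 := by
      rw [show (2*lam : ℝ) = 2*m + 2 by simp only [hmdef]; ring, Real.rpow_add hx,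
        show ((2:ℝ)) = ((2:ℕ):ℝ) by norm_num, Real.rpow_natCast]
    have hdiv : (x/R) ^ (2*m) = x ^ (2*m) / R ^ (2*m) :=
      Real.div_rpow hx.le hR0.le _
    rw [hα', hx2l, hdiv]
    field_simp
    ring
  set c : ℝ := a / (m * b) with hcdef
  set F : ℝ → ℝ := fun s => -c * Real.log ((R/s) ^ m + Real.sqrt ((R/s) ^ (2*m) - 1))
    with hFdef
  -- derivative of F
  have hderiv : ∀ s ∈ Set.Ioo (1:ℝ) R, HasDerivAt F
      (a / Real.sqrt (α * s ^ (2*lam) + b^2 * s^2)) s := by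
    intro s hs
    obtain ⟨hs1, hsR⟩ := hs
    have hs0 : (0:ℝ) < s := lt_trans one_pos hs1
    have hRs : 1 < R / s := (one_lt_div hs0).mpr hsR
    have hRs0 : 0 < R / s := lt_trans one_pos hRs
    set t : ℝ := (R/s) ^ m with htdef
    have ht1 : 1 < t := Real.one_lt_rpow hRs hm
    have ht0 : 0 < t := lt_trans one_pos ht1
    have htq : (R/s) ^ (2*m) = t^2 := by
      rw [show (2*m:ℝ) = m*2 by ring, Real.rpow_mul hRs0.le,
        show ((2:ℝ)) = ((2:ℕ):ℝ) by norm_num, Real.rpow_natCast]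
    set q : ℝ := Real.sqrt ((R/s)^(2*m) - 1) with hqdef
    have htq1 : 0 < t^2 - 1 := by nlinarith
    have hq0 : 0 < q := by rw [hqdef, htq]; exact Real.sqrt_pos.mpr htq1
    have hq2 : q^2 = t^2 - 1 := by rw [hqdef, htq]; exact Real.sq_sqrt htq1.le
    -- sqrt identity
    have hkey : Real.sqrt (α * s ^ (2*lam) + b^2*s^2) = b*s*q/t := by
      have hinv : (s/R) ^ (2*m) = (t^2)⁻¹ := by
        rw [show s/R = (R/s)⁻¹ by rw [inv_div], Real.inv_rpow hRs0.le, htq]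
      have h1 : α * s ^ (2*lam) + b^2*s^2 = (b*s*q/t)^2 := by
        rw [hG s hs0, hinv, div_pow, mul_pow, mul_pow, hq2]
        field_simp
      rw [h1, Real.sqrt_sq (le_of_lt (div_pos (mul_pos (mul_pos hb hs0) hq0) ht0))]
    -- derivative chain
    have hdRs : HasDerivAt (fun x : ℝ => R / x) (-(R / s^2)) s := by
      have := (hasDerivAt_inv hs0.ne').const_mul R
      simpa [div_eq_mul_inv, mul_neg] using this
    have hpow1 : HasDerivAt (fun x : ℝ => (R/x) ^ m) (-(m * t / s)) s := by
      have h := (Real.hasDerivAt_rpow_const (x := R/s) (p := m) (Or.inl hRs0.ne')).comp s hdRs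
      refine h.congr_deriv (Eq.symm ?_)
      rw [show (R/s) ^ (m-1) = (R/s)^m / (R/s) from by rw [Real.rpow_sub hRs0, Real.rpow_one],
        ← htdef]
      field_simp
    have hpow2 : HasDerivAt (fun x : ℝ => (R/x) ^ (2*m)) (-(2*m * t^2 / s)) s := by
      have h := (Real.hasDerivAt_rpow_const (x := R/s) (p := 2*m) (Or.inl hRs0.ne')).comp s hdRs
      refine h.congr_deriv (Eq.symm ?_)
      rw [show (R/s) ^ (2*m-1) = (R/s)^(2*m) / (R/s) from by
        rw [Real.rpow_sub hRs0, Real.rpow_one], htq]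
      field_simp
    have hne : (R/s) ^ (2*m) - 1 ≠ 0 := by rw [htq]; exact ne_of_gt htq1
    have hsqrtD : HasDerivAt (fun x : ℝ => Real.sqrt ((R/x) ^ (2*m) - 1))
        (1 / (2*q) * (-(2*m * t^2 / s))) s :=
      (Real.hasDerivAt_sqrt hne).comp s (hpow2.sub_const 1)
    have hsum := hpow1.add hsqrtD
    have hpos : 0 < t + q := by linarith
    have hlogD := (Real.hasDerivAt_log hpos.ne').comp s hsum
    have hF := hlogD.const_mul (-c)
    refine hF.congr_deriv (Eq.symm ?_)
    rw [hkey, hcdef]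
    field_simp
    ring
  -- continuity of F
  have hcont : ContinuousOn F (Set.Icc 1 R) := by
    have hRx : ContinuousOn (fun x : ℝ => R / x) (Set.Icc 1 R) :=
      continuousOn_const.div continuousOn_id (fun x hx => by nlinarith [hx.1])
    have h1 : ContinuousOn (fun x : ℝ => (R/x) ^ m) (Set.Icc 1 R) :=
      hRx.rpow_const (fun x hx => Or.inr hm.le)
    have h2 : ContinuousOn (fun x : ℝ => Real.sqrt ((R/x) ^ (2*m) - 1)) (Set.Icc 1 R) :=
      Real.continuous_sqrt.comp_continuousOn
        ((hRx.rpow_const fun x hx => Or.inr (by positivity)).sub continuousOn_const)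
    refine continuousOn_const.mul ((h1.add h2).log fun x hx => ?_)
    have hx0 : (0:ℝ) < x := lt_of_lt_of_le one_pos hx.1
    have : 0 < (R/x) ^ m := Real.rpow_pos_of_pos (div_pos hR0 hx0) _
    have := Real.sqrt_nonneg ((R/x) ^ (2*m) - 1)
    exact ne_of_gt (add_pos_of_pos_of_nonneg ‹0 < (R/x) ^ m› this)
  -- integrability
  have hint : IntervalIntegrable
      (fun s => a / Real.sqrt (α * s ^ (2*lam) + b^2*s^2)) volume 1 R := by
    set k : ℝ := min 1 (2*m) with hkdef
    have hk0 : 0 < k := lt_min one_pos (by linarith)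
    have hkR : 0 < k / R := div_pos hk0 hR0
    set C : ℝ := a / (b * Real.sqrt (k/R)) with hCdef
    have hC0 : 0 < C := div_pos ha (mul_pos hb (Real.sqrt_pos.mpr hkR))
    have hgint : IntervalIntegrable (fun x => C * (R - x) ^ (-(1/2) : ℝ)) volume 1 R := by
      have h1 : IntervalIntegrable (fun x : ℝ => x ^ (-(1/2):ℝ)) volume 0 (R-1) :=
        intervalIntegral.intervalIntegrable_rpow' (by norm_num)
      have h2 := h1.comp_sub_left R
      simp only [sub_zero, sub_sub_cancel] at h2
      exact h2.symm.const_mul C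
    have hmeas : AEStronglyMeasurable
        (fun s : ℝ => a / Real.sqrt (α * s ^ (2*lam) + b^2*s^2))
        (volume.restrict (Set.uIoc (1:ℝ) R)) := by
      apply Measurable.aestronglyMeasurable
      fun_prop
    refine hgint.mono_fun hmeas ?_
    rw [Set.uIoc_of_le hR.le]
    refine (ae_restrict_iff' measurableSet_Ioc).mpr (ae_of_all _ fun x hx => ?_)
    obtain ⟨hx1, hxR⟩ := hx
    have hx0 : 0 < x := lt_trans one_pos hx1
    have hRx0 : (0:ℝ) ≤ R - x := by linarith
    have hxR1 : x / R ≤ 1 := (div_le_one hR0).mpr hxR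
    have hxR0 : 0 < x / R := div_pos hx0 hR0
    have hber : k * (1 - x/R) ≤ 1 - (x/R) ^ (2*m) := by
      rcases le_total (2*m) 1 with h | h
      · have hB := rpow_one_add_le_one_add_mul_self (s := x/R - 1) (p := 2*m)
          (by linarith) (by linarith) h
        rw [show (1 + (x/R - 1) : ℝ) = x/R by ring] at hB
        have hk : k ≤ 2*m := min_le_right _ _
        nlinarith
      · have h2 : (x/R) ^ (2*m) ≤ (x/R) ^ (1:ℝ) :=
          Real.rpow_le_rpow_of_exponent_ge hxR0 hxR1 h
        rw [Real.rpow_one] at h2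
        have hk : k ≤ 1 := min_le_left _ _
        nlinarith
    have hGge : b^2 * (k/R) * (R - x) ≤ α * x ^ (2*lam) + b^2 * x^2 := by
      rw [hG x hx0]
      have hx2 : 1 ≤ x^2 := by nlinarith
      have h1 : (x/R) ^ (2*m) ≤ 1 := Real.rpow_le_one hxR0.le hxR1 (by positivity)
      have h0 : 0 ≤ 1 - (x/R) ^ (2*m) := by linarith
      have hkk : k * (1 - x/R) = k/R * (R - x) := by field_simp
      have step1 : b^2 * (k * (1 - x/R)) ≤ b^2 * (1 - (x/R) ^ (2*m)) :=
        mul_le_mul_of_nonneg_left hber (sq_nonneg b)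
      have step2 : b^2 * (1 - (x/R) ^ (2*m)) ≤ b^2 * x^2 * (1 - (x/R) ^ (2*m)) :=
        mul_le_mul_of_nonneg_right (le_mul_of_one_le_right (sq_nonneg b) hx2) h0
      nlinarith [step1, step2]
    beta_reduce
    rcases eq_or_lt_of_le hxR with heq | hlt
    · -- x = R : both sides are 0
      subst heq
      have hGR : α * x ^ (2*lam) + b^2 * x^2 = 0 := by
        rw [hG x hx0, div_self hx0.ne', Real.one_rpow]
        ring
      rw [hGR, Real.sqrt_zero, div_zero, sub_self, Real.zero_rpow (by norm_num), mul_zero]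
    · -- x < R
      have hden : 0 < b * Real.sqrt (k/R) * Real.sqrt (R-x) :=
        mul_pos (mul_pos hb (Real.sqrt_pos.mpr hkR)) (Real.sqrt_pos.mpr (by linarith))
      have hfact : Real.sqrt (b^2 * (k/R) * (R-x)) = b * Real.sqrt (k/R) * Real.sqrt (R-x) := by
        rw [show b^2 * (k/R) * (R-x) = (b * Real.sqrt (k/R) * Real.sqrt (R-x))^2 from by
          rw [mul_pow, mul_pow, Real.sq_sqrt hkR.le, Real.sq_sqrt hRx0]]
        exact Real.sqrt_sq hden.le
      have hrhs : C * (R - x) ^ (-(1/2):ℝ) = a / (b * Real.sqrt (k/R) * Real.sqrt (R-x)) := by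
        rw [Real.rpow_neg hRx0, ← Real.sqrt_eq_rpow, hCdef]
        field_simp
      rw [Real.norm_eq_abs, Real.norm_eq_abs,
        abs_of_nonneg (div_nonneg ha.le (Real.sqrt_nonneg _)),
        abs_of_nonneg (mul_nonneg hC0.le (Real.rpow_nonneg hRx0 _)), hrhs, ← hfact]
      have hsq : Real.sqrt (b^2 * (k/R) * (R-x)) ≤ Real.sqrt (α * x ^ (2*lam) + b^2*x^2) :=
        Real.sqrt_le_sqrt hGge
      have hsqpos : 0 < Real.sqrt (b^2 * (k/R) * (R-x)) := by rw [hfact]; exact hden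
      gcongr
  -- FTC
  rw [intervalIntegral.integral_eq_sub_of_hasDeriv_right_of_le hR.le hcont
    (fun x hx => (hderiv x hx).hasDerivWithinAt) hint]
  have hFR : F R = 0 := by
    show -c * Real.log ((R/R) ^ m + Real.sqrt ((R/R) ^ (2*m) - 1)) = 0
    rw [div_self hR0.ne', Real.one_rpow, Real.one_rpow, sub_self, Real.sqrt_zero, add_zero,
      Real.log_one, mul_zero]
  have hF1 : F 1 = -c * Real.log (R ^ m + Real.sqrt (R ^ (2*m) - 1)) := by
    show -c * Real.log ((R/1) ^ m + Real.sqrt ((R/1) ^ (2*m) - 1)) = _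
    rw [div_one]
  rw [hFR, hF1, hcdef]
  ring
end

section
/- Let a, b > 0, λ ≠ 1, and α with 1 + α/b² ≥ 0. Define H(t) = 2^(1/(λ-1)) (1 + √(1+α/b²))^(1/(λ-1)) t^(b/a) / [(1 + √(1+α/b²))² - t^(2(λ-1)b/a) · α/b²]^(1/(λ-1)) for t > 0 on an interval where the bracketed denominator is positive. Then H satisfies the ODE a² t² H(t) H''(t) + a² t H(t) H'(t) + (λ-1) b² H(t)² = λ a² t² H'(t)². -/
lemma stmt6_aux1 (c A X M Dv x α b μ γ β : ℝ) (hx : x ≠ 0) (hDv : Dv ≠ 0)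
    (hM : M ≠ 0) (hb : b ≠ 0) :
    c * A / M * (β / x + μ * γ * (α / b ^ 2) * (X / x) / Dv)
      = (c * (β * (A / x)) * M
          - c * A * (-(γ * (X / x) * α / b ^ 2) * μ * (M / Dv))) / M ^ 2 := by
  field_simp
  ring

lemma stmt6_aux2 (X Dv t a b lam α μ γ β : ℝ) (ht : t ≠ 0) (hDv : Dv ≠ 0) (ha : a ≠ 0)
    (hb : b ≠ 0) (hl : lam - 1 ≠ 0) (hμ : μ = 1 / (lam - 1))
    (hγ : γ = 2 * (lam - 1) * b / a) (hβ : β = b / a) :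
    a ^ 2 * t ^ 2 * ((0 * t - β * 1) / t ^ 2 +
        (μ * γ * (α / b ^ 2) * ((γ - 1) * (X / t / t)) * Dv
          - μ * γ * (α / b ^ 2) * (X / t) * (-(γ * (X / t) * α / b ^ 2))) / Dv ^ 2)
      = lam * a ^ 2 * t ^ 2 * (β / t + μ * γ * (α / b ^ 2) * (X / t) / Dv) ^ 2
        - a ^ 2 * t ^ 2 * (β / t + μ * γ * (α / b ^ 2) * (X / t) / Dv) ^ 2
        - a ^ 2 * t * (β / t + μ * γ * (α / b ^ 2) * (X / t) / Dv)
        - (lam - 1) * b ^ 2 := by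
  subst hμ hγ hβ
  field_simp
  ring

set_option maxHeartbeats 1000000 in
theorem stmt6 (a b lam α t₁ t₂ : ℝ) (ha : 0 < a) (hb : 0 < b) (hlam : lam ≠ 1)
    (hα : 0 ≤ 1 + α / b ^ 2)
    (H : ℝ → ℝ)
    (hH : ∀ t : ℝ, H t = (2 : ℝ) ^ ((1 : ℝ) / (lam - 1)) *
        (1 + Real.sqrt (1 + α / b ^ 2)) ^ ((1 : ℝ) / (lam - 1)) * t ^ (b / a) /
        ((1 + Real.sqrt (1 + α / b ^ 2)) ^ 2 - t ^ (2 * (lam - 1) * b / a) * α / b ^ 2)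
          ^ ((1 : ℝ) / (lam - 1)))
    (hsub : Set.Ioo t₁ t₂ ⊆ Set.Ioi (0 : ℝ))
    (hden : ∀ t ∈ Set.Ioo t₁ t₂,
      0 < (1 + Real.sqrt (1 + α / b ^ 2)) ^ 2 - t ^ (2 * (lam - 1) * b / a) * α / b ^ 2) :
    ∀ t ∈ Set.Ioo t₁ t₂,
      a ^ 2 * t ^ 2 * H t * deriv (deriv H) t + a ^ 2 * t * H t * deriv H t
        + (lam - 1) * b ^ 2 * (H t) ^ 2 = lam * a ^ 2 * t ^ 2 * (deriv H t) ^ 2 := by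
  have ha' : a ≠ 0 := ha.ne'
  have hb' : b ≠ 0 := hb.ne'
  have hl : lam - 1 ≠ 0 := sub_ne_zero.mpr hlam
  set μ : ℝ := (1 : ℝ) / (lam - 1) with hμ
  set γ : ℝ := 2 * (lam - 1) * b / a with hγ
  set β : ℝ := b / a with hβ
  set s : ℝ := 1 + Real.sqrt (1 + α / b ^ 2) with hs
  set c : ℝ := (2 : ℝ) ^ μ * s ^ μ with hc
  -- derivative formula
  have key : ∀ x ∈ Set.Ioo t₁ t₂, HasDerivAt H
      (H x * (β / x + μ * γ * (α / b ^ 2) * (x ^ γ / x) / (s ^ 2 - x ^ γ * α / b ^ 2))) x := by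
    intro x hx
    have hx0 : 0 < x := hsub hx
    have hDx : 0 < s ^ 2 - x ^ γ * α / b ^ 2 := hden x hx
    have hDμ : (0 : ℝ) < (s ^ 2 - x ^ γ * α / b ^ 2) ^ μ := Real.rpow_pos_of_pos hDx μ
    have hnum : HasDerivAt (fun y : ℝ => c * y ^ β) (c * (β * x ^ (β - 1))) x :=
      (Real.hasDerivAt_rpow_const (Or.inl hx0.ne')).const_mul c
    have hDd : HasDerivAt (fun y : ℝ => s ^ 2 - y ^ γ * α / b ^ 2)
        (-(γ * x ^ (γ - 1) * α / b ^ 2)) x := by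
      have h1 : HasDerivAt (fun y : ℝ => y ^ γ) (γ * x ^ (γ - 1)) x :=
        Real.hasDerivAt_rpow_const (Or.inl hx0.ne')
      exact ((h1.mul_const α).div_const (b ^ 2)).const_sub (s ^ 2)
    have hdenD : HasDerivAt (fun y : ℝ => (s ^ 2 - y ^ γ * α / b ^ 2) ^ μ)
        (-(γ * x ^ (γ - 1) * α / b ^ 2) * μ * (s ^ 2 - x ^ γ * α / b ^ 2) ^ (μ - 1)) x :=
      hDd.rpow_const (Or.inl hDx.ne')
    have hdiv := hnum.div hdenD hDμ.ne'
    have hfun : H = fun y : ℝ => c * y ^ β / (s ^ 2 - y ^ γ * α / b ^ 2) ^ μ := funext hH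
    rw [show ((fun y : ℝ => c * y ^ β) / fun y : ℝ => (s ^ 2 - y ^ γ * α / b ^ 2) ^ μ) = H from hfun.symm] at hdiv
    convert hdiv using 1
    case e'_4 => rfl
    case e'_5 => rfl
    have e1 : x ^ (β - 1) = x ^ β / x := by
      rw [Real.rpow_sub hx0, Real.rpow_one]
    have e3 : x ^ (γ - 1) = x ^ γ / x := by
      rw [Real.rpow_sub hx0, Real.rpow_one]
    have e2 : (s ^ 2 - x ^ γ * α / b ^ 2) ^ (μ - 1)
        = (s ^ 2 - x ^ γ * α / b ^ 2) ^ μ / (s ^ 2 - x ^ γ * α / b ^ 2) := by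
      rw [Real.rpow_sub hDx, Real.rpow_one]
    rw [hH x, e1, e3, e2]
    exact stmt6_aux1 c (x ^ β) (x ^ γ) ((s ^ 2 - x ^ γ * α / b ^ 2) ^ μ)
      (s ^ 2 - x ^ γ * α / b ^ 2) x α b μ γ β hx0.ne' hDx.ne' hDμ.ne' hb'
  intro t htm
  have ht0 : 0 < t := hsub htm
  have hDt : 0 < s ^ 2 - t ^ γ * α / b ^ 2 := hden t htm
  have hderiv1 : ∀ x ∈ Set.Ioo t₁ t₂, deriv H x
      = H x * (β / x + μ * γ * (α / b ^ 2) * (x ^ γ / x) / (s ^ 2 - x ^ γ * α / b ^ 2)) :=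
    fun x hx => (key x hx).deriv
  -- derivative of the auxiliary factor
  have hu : HasDerivAt
      (fun x : ℝ => β / x + μ * γ * (α / b ^ 2) * (x ^ γ / x) / (s ^ 2 - x ^ γ * α / b ^ 2))
      ((0 * t - β * 1) / t ^ 2 +
        ((μ * γ * (α / b ^ 2) * ((γ * t ^ (γ - 1) * t - t ^ γ * 1) / t ^ 2))
            * (s ^ 2 - t ^ γ * α / b ^ 2)
          - μ * γ * (α / b ^ 2) * (t ^ γ / t) * (-(γ * t ^ (γ - 1) * α / b ^ 2)))
          / (s ^ 2 - t ^ γ * α / b ^ 2) ^ 2) t := by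
    have h1 : HasDerivAt (fun y : ℝ => β / y) ((0 * t - β * 1) / t ^ 2) t :=
      (hasDerivAt_const t β).div (hasDerivAt_id t) ht0.ne'
    have h0 : HasDerivAt (fun y : ℝ => y ^ γ) (γ * t ^ (γ - 1)) t :=
      Real.hasDerivAt_rpow_const (Or.inl ht0.ne')
    have h2 : HasDerivAt (fun y : ℝ => μ * γ * (α / b ^ 2) * (y ^ γ / y))
        (μ * γ * (α / b ^ 2) * ((γ * t ^ (γ - 1) * t - t ^ γ * 1) / t ^ 2)) t :=
      ((h0.div (hasDerivAt_id t) ht0.ne')).const_mul _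
    have h3 : HasDerivAt (fun y : ℝ => s ^ 2 - y ^ γ * α / b ^ 2)
        (-(γ * t ^ (γ - 1) * α / b ^ 2)) t :=
      ((h0.mul_const α).div_const (b ^ 2)).const_sub (s ^ 2)
    exact h1.add (h2.div h3 hDt.ne')
  have hHd := key t htm
  have hP := hHd.mul hu
  have hEq : deriv (deriv H) t = deriv
      (fun x : ℝ => H x * (β / x + μ * γ * (α / b ^ 2) * (x ^ γ / x)
        / (s ^ 2 - x ^ γ * α / b ^ 2))) t := by
    apply Filter.EventuallyEq.deriv_eq
    filter_upwards [isOpen_Ioo.mem_nhds htm] with x hx using hderiv1 x hx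
  rw [hEq, (show HasDerivAt (fun x : ℝ => H x * (β / x + μ * γ * (α / b ^ 2) * (x ^ γ / x)
        / (s ^ 2 - x ^ γ * α / b ^ 2))) _ t from hP).deriv, hderiv1 t htm]
  have e3 : t ^ (γ - 1) = t ^ γ / t := by rw [Real.rpow_sub ht0, Real.rpow_one]
  rw [e3]
  have e4 : (γ * (t ^ γ / t) * t - t ^ γ * 1) / t ^ 2 = (γ - 1) * (t ^ γ / t / t) := by
    field_simp
  rw [e4]
  linear_combination (H t) ^ 2 * stmt6_aux2 (t ^ γ) (s ^ 2 - t ^ γ * α / b ^ 2) t a b lam α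
    μ γ β ht0.ne' hDt.ne' ha' hb' hl hμ hγ hβ
end

section
/- Let h : A₁ → A₂ be a C¹ homeomorphism between annuli A₁ = {1 ≤ |z| ≤ r}, A₂ = {1 ≤ |w| ≤ R} with |h| = 1 on |z| = 1 and |h| = R on |z| = r. Then ∬_{A₁} (|h|_N)²/|h(z)|² dz ≥ 2π (log R)²/(log r), where |h|_N = ∂|h|/∂t is the normal derivative of |h| at z = t e^(iθ). -/
open Set MeasureTheory Real

lemma uniqueDiffOn_annulus {r : ℝ} (hr : 1 < r) :
    UniqueDiffOn ℝ {z : ℂ | 1 ≤ ‖z‖ ∧ ‖z‖ ≤ r} := by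
  have habs : ∀ z : ℂ, ‖z‖ = ‖z‖ := fun z => rfl
  intro x hx
  obtain ⟨hx1, hx2⟩ := hx
  rw [habs] at hx1 hx2
  set δ : ℝ := (r - 1) / 2 with hδdef
  set m : ℝ := (r + 1) / 2 with hmdef
  have hδ : 0 < δ := by rw [hδdef]; linarith
  have hxa : (0:ℝ) < ‖x‖ := by linarith
  set c : ℂ := ((m / ‖x‖ : ℝ) : ℂ) * x with hcdef
  have hcabs : ‖c‖ = m := by
    rw [hcdef, norm_mul, Complex.norm_real, Real.norm_eq_abs, abs_div,
      abs_of_pos (by rw [hmdef]; linarith : (0:ℝ) < m), abs_norm]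
    exact div_mul_cancel₀ m hxa.ne'
  have hball : Metric.closedBall c δ ⊆ {z : ℂ | 1 ≤ ‖z‖ ∧ ‖z‖ ≤ r} := by
    intro w hw
    rw [Metric.mem_closedBall, dist_eq_norm] at hw
    have h1 : |‖w‖ - ‖c‖| ≤ δ := le_trans (abs_norm_sub_norm_le w c) hw
    rw [abs_le] at h1
    constructor <;> rw [habs] <;> rw [hcabs] at h1
    · rw [hmdef, hδdef] at h1; linarith [h1.1]
    · rw [hmdef, hδdef] at h1; linarith [h1.2]
  have hxc : x ∈ Metric.closedBall c δ := by
    rw [Metric.mem_closedBall, dist_eq_norm, hcdef]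
    have he : x - ((m / ‖x‖ : ℝ) : ℂ) * x = ((1 - m / ‖x‖ : ℝ) : ℂ) * x := by
      push_cast; ring
    rw [he, norm_mul, Complex.norm_real, Real.norm_eq_abs]
    have he2 : |1 - m / ‖x‖| * ‖x‖ = |‖x‖ - m| := by
      rw [← abs_of_pos hxa, ← abs_mul, abs_of_pos hxa]
      congr 1
      rw [sub_mul, div_mul_cancel₀ _ hxa.ne', one_mul]
    rw [he2, abs_le]
    constructor <;> rw [hmdef, hδdef] <;> linarith
  exact (uniqueDiffWithinAt_convex (convex_closedBall c δ)
    (by rw [interior_closedBall c hδ.ne']; exact ⟨c, Metric.mem_ball_self hδ⟩)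
    (subset_closure hxc)).mono hball

lemma polar_annulus (r : ℝ) (hr : 1 < r) (F : ℂ → ℝ)
    (hF : IntegrableOn (fun p : ℝ × ℝ => p.1 * F (Complex.polarCoord.symm p))
      (Icc 1 r ×ˢ Ioo (-π) π)) :
    ∫ z in {z : ℂ | 1 ≤ ‖z‖ ∧ ‖z‖ ≤ r}, F z
      = ∫ θ in Ioo (-π) π, ∫ t in Icc 1 r, t * F (Complex.polarCoord.symm (t, θ)) := by
  set A : Set ℂ := {z : ℂ | 1 ≤ ‖z‖ ∧ ‖z‖ ≤ r} with hAdef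
  have hAmeas : MeasurableSet A := by
    have : A = (fun z : ℂ => ‖z‖) ⁻¹' Icc 1 r := by ext z; simp [hAdef, mem_Icc]
    rw [this]
    exact (isClosed_Icc.preimage continuous_norm).measurableSet
  have hrect : (Icc (1:ℝ) r ×ˢ Ioo (-π) π : Set (ℝ × ℝ)) ⊆ polarCoord.target := by
    rw [polarCoord_target]
    intro p hp
    exact ⟨lt_of_lt_of_le one_pos (by exact_mod_cast hp.1.1), hp.2⟩
  have step1 : ∫ z in A, F z = ∫ z, A.indicator F z := (integral_indicator hAmeas).symm
  have step2 : ∫ z, A.indicator F z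
      = ∫ p in polarCoord.target, p.1 • (A.indicator F) (Complex.polarCoord.symm p) :=
    (Complex.integral_comp_polarCoord_symm (A.indicator F)).symm
  have step3 : ∫ p in polarCoord.target, p.1 • (A.indicator F) (Complex.polarCoord.symm p)
      = ∫ p in polarCoord.target,
          (Icc (1:ℝ) r ×ˢ Ioo (-π) π).indicator
            (fun p : ℝ × ℝ => p.1 * F (Complex.polarCoord.symm p)) p := by
    apply setIntegral_congr_fun (polarCoord.open_target.measurableSet)
    intro p hp
    rw [polarCoord_target] at hp
    obtain ⟨hp1, hp2⟩ := hp
    rw [mem_Ioi] at hp1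
    have habs : ‖Complex.polarCoord.symm p‖ = p.1 := by
      rw [Complex.norm_polarCoord_symm, abs_of_pos hp1]
    by_cases hmem : Complex.polarCoord.symm p ∈ A
    · have hpmem : p ∈ (Icc (1:ℝ) r ×ˢ Ioo (-π) π : Set (ℝ × ℝ)) := by
        constructor
        · rw [mem_Icc, ← habs]; exact ⟨hmem.1, hmem.2⟩
        · exact hp2
      simp only [indicator_of_mem hmem, indicator_of_mem hpmem, smul_eq_mul]
    · have hpmem : p ∉ (Icc (1:ℝ) r ×ˢ Ioo (-π) π : Set (ℝ × ℝ)) := by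
        intro hc
        exact hmem ⟨by rw [habs]; exact_mod_cast hc.1.1, by rw [habs]; exact hc.1.2⟩
      simp only [indicator_of_notMem hmem, indicator_of_notMem hpmem, smul_zero]
  have step4 : ∫ p in polarCoord.target,
          (Icc (1:ℝ) r ×ˢ Ioo (-π) π).indicator
            (fun p : ℝ × ℝ => p.1 * F (Complex.polarCoord.symm p)) p
      = ∫ p in (Icc (1:ℝ) r ×ˢ Ioo (-π) π),
          p.1 * F (Complex.polarCoord.symm p) := by
    rw [setIntegral_indicator ((measurableSet_Icc).prod measurableSet_Ioo),
      inter_eq_self_of_subset_right hrect]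
  have step5 : ∫ p in (Icc (1:ℝ) r ×ˢ Ioo (-π) π),
          p.1 * F (Complex.polarCoord.symm p)
      = ∫ θ in Ioo (-π) π, ∫ t in Icc 1 r, t * F (Complex.polarCoord.symm (t, θ)) := by
    have hFr : Integrable (fun p : ℝ × ℝ => p.1 * F (Complex.polarCoord.symm p))
        ((volume.restrict (Icc (1:ℝ) r)).prod (volume.restrict (Ioo (-π) π))) := by
      rw [Measure.prod_restrict, ← Measure.volume_eq_prod]
      exact hF
    rw [Measure.volume_eq_prod, ← Measure.prod_restrict]
    rw [integral_prod _ hFr]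
    exact integral_integral_swap hFr
  rw [step1, step2, step3, step4, step5]

lemma continuous_complex_polarCoord_symm :
    Continuous (fun p : ℝ × ℝ => (Complex.polarCoord.symm p : ℂ)) := by
  have he : (fun p : ℝ × ℝ => (Complex.polarCoord.symm p : ℂ))
      = fun p : ℝ × ℝ => (p.1 : ℂ) * (Real.cos p.2 + Real.sin p.2 * Complex.I) := by
    funext p; exact_mod_cast Complex.polarCoord_symm_apply p
  rw [he]; continuity

lemma integrableOn_rect_of_bound (r : ℝ) (hr : 1 < r) (G : ℝ × ℝ → ℝ) (M : ℝ)
    (hmeas : AEStronglyMeasurable G (volume.restrict (Icc 1 r ×ˢ Ioo (-π) π)))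
    (hbd : ∀ p ∈ (Icc (1:ℝ) r ×ˢ Ioo (-π) π), |G p| ≤ M) :
    IntegrableOn G (Icc (1:ℝ) r ×ˢ Ioo (-π) π) := by
  have hms : MeasurableSet (Icc (1:ℝ) r ×ˢ Ioo (-π) π) :=
    measurableSet_Icc.prod measurableSet_Ioo
  haveI : IsFiniteMeasure (volume.restrict (Icc (1:ℝ) r ×ˢ Ioo (-π) π)) := by
    constructor
    rw [Measure.restrict_apply_univ, Measure.volume_eq_prod, Measure.prod_prod]
    exact ENNReal.mul_lt_top (by simp) (by simp)
  apply Integrable.mono' (integrable_const M) hmeas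
  rw [ae_restrict_iff' hms]
  exact Filter.Eventually.of_forall fun p hp => by rw [Real.norm_eq_abs]; exact hbd p hp

lemma integral_inv_sq_annulus (r : ℝ) (hr : 1 < r) :
    ∫ z in {z : ℂ | 1 ≤ ‖z‖ ∧ ‖z‖ ≤ r}, 1 / (‖z‖)^2
      = 2 * π * Real.log r := by
  have key : ∀ p : ℝ × ℝ, p ∈ (Icc (1:ℝ) r ×ˢ Ioo (-π) π) →
      p.1 * (1 / (‖Complex.polarCoord.symm p‖)^2) = 1 / p.1 := by
    intro p hp
    have h1 : (1:ℝ) ≤ p.1 := hp.1.1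
    rw [Complex.norm_polarCoord_symm, abs_of_pos (by linarith)]
    field_simp
  rw [polar_annulus r hr _ ?hint]
  case hint =>
    apply integrableOn_rect_of_bound r hr _ 1
    · apply Measurable.aestronglyMeasurable
      apply Measurable.mul measurable_fst
      apply Measurable.div measurable_const
      exact ((continuous_norm.comp continuous_complex_polarCoord_symm).pow 2).measurable
    · intro p hp
      rw [key p hp]
      have h1 : (1:ℝ) ≤ p.1 := hp.1.1
      rw [abs_of_pos (by positivity : (0:ℝ) < 1 / p.1)]
      rw [div_le_one (by linarith)]
      exact h1
  have inner : ∀ θ ∈ Ioo (-π) π,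
      ∫ t in Icc (1:ℝ) r, t * (1 / (‖Complex.polarCoord.symm (t, θ)‖)^2)
        = Real.log r := by
    intro θ hθ
    rw [setIntegral_congr_fun measurableSet_Icc
      (fun t ht => key (t, θ) ⟨ht, hθ⟩)]
    rw [integral_Icc_eq_integral_Ioc, ← intervalIntegral.integral_of_le hr.le]
    rw [integral_one_div (by
      intro hc; rw [uIcc_of_le hr.le] at hc
      exact absurd hc.1 (by norm_num) : (0:ℝ) ∉ uIcc 1 r)]
    simp
  rw [setIntegral_congr_fun measurableSet_Ioo inner]
  rw [setIntegral_const, Real.volume_real_Ioo,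
    show π - -π = 2 * π by ring,
    max_eq_left (by positivity), smul_eq_mul]

-- assume earlier lemmas
lemma annulus_isCompact (r : ℝ) : IsCompact {z : ℂ | 1 ≤ ‖z‖ ∧ ‖z‖ ≤ r} := by
  apply (isCompact_closedBall (0:ℂ) r).of_isClosed_subset
  · have : {z : ℂ | 1 ≤ ‖z‖ ∧ ‖z‖ ≤ r} = (fun z : ℂ => ‖z‖) ⁻¹' Icc 1 r := by
      ext z; simp [mem_Icc]
    rw [this]
    exact isClosed_Icc.preimage continuous_norm
  · intro z hz
    rw [Metric.mem_closedBall, dist_zero_right]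
    exact hz.2

lemma annulus_facts (r : ℝ) (hr : 1 < r) (h : ℂ → ℂ)
    (hC1 : ContDiffOn ℝ 1 h {z : ℂ | 1 ≤ ‖z‖ ∧ ‖z‖ ≤ r})
    (hmaps : ∀ z ∈ {z : ℂ | 1 ≤ ‖z‖ ∧ ‖z‖ ≤ r}, 1 ≤ ‖h z‖) :
    ∃ M : ℝ, 0 ≤ M ∧
      (∀ z : ℂ, 1 < ‖z‖ → ‖z‖ < r →
        (DifferentiableAt ℝ (fun w => ‖h w‖) z ∧
         |fderiv ℝ (fun w => ‖h w‖) z (z / (‖z‖ : ℂ))| ≤ M)) ∧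
      ContinuousOn (fun z => fderiv ℝ (fun w => ‖h w‖) z)
        {z : ℂ | 1 < ‖z‖ ∧ ‖z‖ < r} := by
  set A : Set ℂ := {z : ℂ | 1 ≤ ‖z‖ ∧ ‖z‖ ≤ r} with hAdef
  set U : Set ℂ := {z : ℂ | 1 < ‖z‖ ∧ ‖z‖ < r} with hUdef
  set G : ℂ → ℝ := fun w => ‖h w‖ with hGdef
  have hGA : ContDiffOn ℝ 1 G A := by
    intro z hz
    refine (hC1 z hz).norm ℝ ?_
    intro hc
    have := hmaps z hz
    rw [hc] at this
    simp at this
    linarith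
  have hUopen : IsOpen U := by
    apply IsOpen.inter (s := {z : ℂ | 1 < ‖z‖}) (t := {z : ℂ | ‖z‖ < r})
    · exact isOpen_lt continuous_const continuous_norm
    · exact isOpen_lt continuous_norm continuous_const
  have hUA : U ⊆ A := fun z hz => ⟨hz.1.le, hz.2.le⟩
  have hnhds : ∀ z ∈ U, A ∈ nhds z := fun z hz =>
    Filter.mem_of_superset (hUopen.mem_nhds hz) hUA
  have hfw : ∀ z ∈ U, fderivWithin ℝ G A z = fderiv ℝ G z := fun z hz =>
    fderivWithin_of_mem_nhds (hnhds z hz)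
  have hcontfw : ContinuousOn (fderivWithin ℝ G A) A :=
    hGA.continuousOn_fderivWithin (uniqueDiffOn_annulus hr) le_rfl
  obtain ⟨C, hC⟩ := (annulus_isCompact r).exists_bound_of_continuousOn hcontfw
  refine ⟨max C 0, le_max_right _ _, fun z hz1 hz2 => ?_, ?_⟩
  · have hzU : z ∈ U := ⟨hz1, hz2⟩
    have hdiff : DifferentiableAt ℝ G z :=
      ((hGA z (hUA hzU)).contDiffAt (hnhds z hzU)).differentiableAt one_ne_zero
    refine ⟨hdiff, ?_⟩
    have hzne : ‖z‖ ≠ 0 := by linarith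
    have hdir : ‖z / (‖z‖ : ℂ)‖ = 1 := by
      rw [norm_div, Complex.norm_real, Real.norm_eq_abs,
        abs_of_pos (by linarith : (0:ℝ) < ‖z‖), div_self hzne]
    calc |fderiv ℝ G z (z / (‖z‖ : ℂ))|
        ≤ ‖fderiv ℝ G z‖ * ‖z / (‖z‖ : ℂ)‖ :=
          (fderiv ℝ G z).le_opNorm _
      _ = ‖fderivWithin ℝ G A z‖ := by rw [hdir, hfw z hzU, mul_one]
      _ ≤ C := hC z (hUA hzU)
      _ ≤ max C 0 := le_max_left _ _
  · exact (hcontfw.mono hUA).congr (fun z hz => (hfw z hz).symm)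

lemma integrableOn_of_bound (s : Set (ℝ × ℝ)) (hms : MeasurableSet s)
    (hfin : volume s < ⊤) (G : ℝ × ℝ → ℝ) (M : ℝ)
    (hmeas : AEStronglyMeasurable G (volume.restrict s))
    (hbd : ∀ p ∈ s, |G p| ≤ M) : IntegrableOn G s := by
  haveI : IsFiniteMeasure (volume.restrict s) := by
    constructor
    rwa [Measure.restrict_apply_univ]
  apply Integrable.mono' (integrable_const M) hmeas
  rw [ae_restrict_iff' hms]
  exact Filter.Eventually.of_forall fun p hp => by rw [Real.norm_eq_abs]; exact hbd p hp

lemma cross_integral (r R : ℝ) (hr : 1 < r) (hR : 1 < R) (h : ℂ → ℂ)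
    (hC1 : ContDiffOn ℝ 1 h {z : ℂ | 1 ≤ ‖z‖ ∧ ‖z‖ ≤ r})
    (hmaps : ∀ z ∈ {z : ℂ | 1 ≤ ‖z‖ ∧ ‖z‖ ≤ r}, 1 ≤ ‖h z‖)
    (hb1 : ∀ z : ℂ, ‖z‖ = 1 → ‖h z‖ = 1)
    (hb2 : ∀ z : ℂ, ‖z‖ = r → ‖h z‖ = R) :
    ∫ z in {z : ℂ | 1 ≤ ‖z‖ ∧ ‖z‖ ≤ r},
        (fderiv ℝ (fun w => ‖h w‖) z (z / (‖z‖ : ℂ)))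
          / (‖z‖ * ‖h z‖)
      = 2 * π * Real.log R := by
  set A : Set ℂ := {z : ℂ | 1 ≤ ‖z‖ ∧ ‖z‖ ≤ r} with hAdef
  set N : ℂ → ℝ := fun z => fderiv ℝ (fun w => ‖h w‖) z (z / (‖z‖ : ℂ)) with hNdef
  set F : ℂ → ℝ := fun z => N z / (‖z‖ * ‖h z‖) with hFdef
  obtain ⟨M, hM0, hMb, hNcont⟩ := annulus_facts r hr h hC1 hmaps
  -- basic facts about e and φ
  have hsmul : ∀ (t : ℝ) (e : ℂ), ‖e‖ = 1 → 0 ≤ t → ‖t • e‖ = t := by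
    intro t e he ht
    rw [Complex.real_smul, norm_mul, Complex.norm_real, Real.norm_eq_abs, he, mul_one, abs_of_nonneg ht]
  -- inner integral via FTC
  have inner : ∀ θ ∈ Ioo (-π) π,
      ∫ t in Icc (1:ℝ) r, t * F (Complex.polarCoord.symm (t, θ)) = Real.log R := by
    intro θ hθ
    set e : ℂ := (Real.cos θ : ℂ) + (Real.sin θ : ℂ) * Complex.I with hedef
    have he : ‖e‖ = 1 := by
      rw [hedef, Complex.ofReal_cos, Complex.ofReal_sin]
      exact Complex.norm_cos_add_sin_mul_I θ
    have hsymm : ∀ t : ℝ, (Complex.polarCoord.symm (t, θ) : ℂ) = t • e := by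
      intro t
      rw [Complex.polarCoord_symm_apply, Complex.real_smul, hedef]
    have hmem : ∀ t ∈ Icc (1:ℝ) r, t • e ∈ A := by
      intro t ht
      constructor <;> rw [hsmul t e he (by linarith [ht.1])]
      · exact ht.1
      · exact ht.2
    set f' : ℝ → ℝ := fun t => fderiv ℝ (fun w => ‖h w‖) (t • e) e / ‖h (t • e)‖ with hf'def
    have hstep : ∀ t ∈ Icc (1:ℝ) r, t * F (Complex.polarCoord.symm (t, θ)) = f' t := by
      intro t ht
      have ht1 : (1:ℝ) ≤ t := ht.1
      have htpos : (0:ℝ) < t := by linarith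
      have habs : ‖t • e‖ = t := hsmul t e he htpos.le
      have hdir : (t • e) / ((‖t • e‖ : ℝ) : ℂ) = e := by
        rw [habs, Complex.real_smul, mul_comm]
        exact mul_div_cancel_right₀ e (by exact_mod_cast htpos.ne' : (t:ℂ) ≠ 0)
      have hH : (1:ℝ) ≤ ‖h (t • e)‖ := hmaps _ (hmem t ht)
      rw [hsymm t, hFdef, hNdef, hf'def]
      simp only []
      rw [hdir, habs, ← mul_div_assoc,
        mul_div_mul_left _ _ htpos.ne']
    rw [setIntegral_congr_fun measurableSet_Icc hstep]
    rw [integral_Icc_eq_integral_Ioc, ← intervalIntegral.integral_of_le hr.le]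
    have hg1 : ‖h ((1:ℝ) • e)‖ = 1 := hb1 _ (hsmul 1 e he zero_le_one)
    have hgr : ‖h ((r:ℝ) • e)‖ = R := hb2 _ (hsmul r e he (by linarith))
    have hφc : Continuous (fun t : ℝ => t • e) := continuous_id.smul continuous_const
    have hhc : ContinuousOn (fun t : ℝ => h (t • e)) (Icc 1 r) :=
      hC1.continuousOn.comp hφc.continuousOn hmem
    have hcont : ContinuousOn (fun t : ℝ => Real.log ‖h (t • e)‖) (Icc 1 r) := by
      apply ContinuousOn.log hhc.norm
      · intro t ht
        have := hmaps _ (hmem t ht)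
        intro hzero; rw [hzero] at this; linarith
    have hderiv : ∀ t ∈ Ioo (1:ℝ) r,
        HasDerivWithinAt (fun t : ℝ => Real.log ‖h (t • e)‖) (f' t) (Ioi t) t := by
      intro t ht
      have htpos : (0:ℝ) < t := by linarith [ht.1]
      have habs : ‖t • e‖ = t := hsmul t e he htpos.le
      obtain ⟨hdiff, _⟩ := hMb (t • e) (by rw [habs]; exact ht.1) (by rw [habs]; exact ht.2)
      have hφ : HasDerivAt (fun s : ℝ => s • e) ((1:ℝ) • e) t := (hasDerivAt_id t).smul_const e
      rw [one_smul] at hφ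
      have hc : HasDerivAt (fun s : ℝ => ‖h (s • e)‖) (fderiv ℝ (fun w => ‖h w‖) (t • e) e) t :=
        hdiff.hasFDerivAt.comp_hasDerivAt (l := fun w => ‖h w‖) (f := fun s : ℝ => s • e) t hφ
      have hne : ‖h (t • e)‖ ≠ 0 := by
        have := hmaps _ (hmem t ⟨ht.1.le, ht.2.le⟩)
        intro hzero; rw [hzero] at this; linarith
      exact (hc.log hne).hasDerivWithinAt
    have hint : IntervalIntegrable f' volume 1 r := by
      rw [intervalIntegrable_iff_integrableOn_Ioc_of_le hr.le]
      have haeeq : (Ioo (1:ℝ) r : Set ℝ) =ᵐ[volume] Ioc 1 r := Ioo_ae_eq_Ioc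
      refine IntegrableOn.congr_set_ae ?_ haeeq.symm
      haveI : IsFiniteMeasure (volume.restrict (Ioo (1:ℝ) r)) := by
        constructor
        rw [Measure.restrict_apply_univ]
        exact lt_of_le_of_lt (le_of_eq (Real.volume_Ioo)) (by simp)
      have hf'cont : ContinuousOn f' (Ioo 1 r) := by
        apply ContinuousOn.div
        · apply ContinuousOn.clm_apply
          · apply hNcont.comp hφc.continuousOn
            intro t ht
            have htpos : (0:ℝ) < t := by linarith [ht.1]
            rw [mem_setOf_eq, hsmul t e he htpos.le]
            exact ht
          · exact continuousOn_const
        · exact (hhc.mono (fun t ht => ⟨ht.1.le, ht.2.le⟩)).norm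
        · intro t ht
          have := hmaps _ (hmem t ⟨ht.1.le, ht.2.le⟩)
          intro hzero; rw [hzero] at this; linarith
      apply Integrable.mono' (integrable_const M)
        (hf'cont.aestronglyMeasurable measurableSet_Ioo)
      rw [ae_restrict_iff' measurableSet_Ioo]
      apply Filter.Eventually.of_forall
      intro t ht
      have htpos : (0:ℝ) < t := by linarith [ht.1]
      have habs : ‖t • e‖ = t := hsmul t e he htpos.le
      obtain ⟨_, hb⟩ := hMb (t • e) (by rw [habs]; exact ht.1) (by rw [habs]; exact ht.2)
      have hdir : (t • e) / ((‖t • e‖ : ℝ) : ℂ) = e := by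
        rw [habs, Complex.real_smul, mul_comm]
        exact mul_div_cancel_right₀ e (by exact_mod_cast htpos.ne' : (t:ℂ) ≠ 0)
      rw [hdir] at hb
      have hH : (1:ℝ) ≤ ‖h (t • e)‖ := by
        exact hmaps _ (hmem t ⟨ht.1.le, ht.2.le⟩)
      rw [hf'def, Real.norm_eq_abs]
      simp only [abs_div]
      have hH1 : (1:ℝ) ≤ |‖h (t • e)‖| := by
        rw [abs_of_nonneg (norm_nonneg _)]; exact hH
      calc |fderiv ℝ (fun w => ‖h w‖) (t • e) e| / |‖h (t • e)‖|
          ≤ |fderiv ℝ (fun w => ‖h w‖) (t • e) e| / 1 :=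
            div_le_div_of_nonneg_left (abs_nonneg _) one_pos hH1
        _ = |fderiv ℝ (fun w => ‖h w‖) (t • e) e| := by rw [div_one]
        _ ≤ M := hb
    have hftc := intervalIntegral.integral_eq_sub_of_hasDeriv_right_of_le hr.le hcont hderiv hint
    rw [hftc]
    rw [hg1, hgr]
    simp
  -- integrability on the rectangle
  have hNmeas : Measurable N := by
    have h1 : Measurable (fderiv ℝ (fun w => ‖h w‖)) := measurable_fderiv ℝ _
    have h2 : Measurable fun z : ℂ => z / (‖z‖ : ℂ) := by
      apply Measurable.div measurable_id
      exact Complex.measurable_ofReal.comp continuous_norm.measurable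
    exact (isBoundedBilinearMap_apply.continuous.measurable).comp (h1.prodMk h2)
  have hsetae : (Icc (1:ℝ) r ×ˢ Ioo (-π) π : Set (ℝ × ℝ))
      =ᵐ[volume] (Ioo (1:ℝ) r ×ˢ Ioo (-π) π : Set (ℝ × ℝ)) := by
    rw [MeasureTheory.ae_eq_set]
    constructor
    · apply measure_mono_null (t := ({1, r} ×ˢ (univ : Set ℝ) : Set (ℝ × ℝ)))
      · rintro ⟨t, θ⟩ ⟨⟨ht, hθ⟩, hnot⟩
        constructor
        · by_contra hcon
          simp only [mem_insert_iff, mem_singleton_iff, not_or] at hcon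
          exact hnot ⟨⟨lt_of_le_of_ne ht.1 (Ne.symm hcon.1), lt_of_le_of_ne ht.2 hcon.2⟩, hθ⟩
        · trivial
      · rw [Measure.volume_eq_prod, Measure.prod_prod]
        have h0 : volume ({1, r} : Set ℝ) = 0 :=
          ((countable_singleton r).insert 1).measure_zero _
        rw [h0, zero_mul]
    · apply measure_mono_null (t := (∅ : Set (ℝ × ℝ)))
      · rintro ⟨t, θ⟩ ⟨⟨ht, hθ⟩, hnot⟩
        exact absurd ⟨⟨ht.1.le, ht.2.le⟩, hθ⟩ hnot
      · exact measure_empty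
  have hmapsOpen : ∀ p : ℝ × ℝ, p ∈ (Ioo (1:ℝ) r ×ˢ Ioo (-π) π : Set (ℝ × ℝ)) →
      ‖Complex.polarCoord.symm p‖ = p.1 := by
    intro p hp
    rw [Complex.norm_polarCoord_symm, abs_of_pos (by linarith [hp.1.1] : (0:ℝ) < p.1)]
  have hFint : IntegrableOn (fun p : ℝ × ℝ => p.1 * F (Complex.polarCoord.symm p))
      (Icc (1:ℝ) r ×ˢ Ioo (-π) π) := by
    refine IntegrableOn.congr_set_ae ?_ hsetae
    apply integrableOn_of_bound _ (measurableSet_Ioo.prod measurableSet_Ioo)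
      (by rw [Measure.volume_eq_prod, Measure.prod_prod]
          exact ENNReal.mul_lt_top (by simp) (by simp)) _ M
    · -- measurability
      have hrectA : MapsTo (fun p : ℝ × ℝ => (Complex.polarCoord.symm p : ℂ))
          (Ioo (1:ℝ) r ×ˢ Ioo (-π) π) A := by
        intro p hp
        rw [hAdef, mem_setOf_eq, hmapsOpen p hp]
        exact ⟨hp.1.1.le, hp.1.2.le⟩
      have m1 : AEMeasurable (fun p : ℝ × ℝ => N (Complex.polarCoord.symm p))
          (volume.restrict (Ioo (1:ℝ) r ×ˢ Ioo (-π) π)) :=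
        (hNmeas.comp continuous_complex_polarCoord_symm.measurable).aemeasurable
      have m2 : AEMeasurable (fun p : ℝ × ℝ => ‖Complex.polarCoord.symm p‖)
          (volume.restrict (Ioo (1:ℝ) r ×ˢ Ioo (-π) π)) :=
        (continuous_norm.comp continuous_complex_polarCoord_symm).measurable.aemeasurable
      have m3 : AEMeasurable (fun p : ℝ × ℝ => ‖h (Complex.polarCoord.symm p)‖)
          (volume.restrict (Ioo (1:ℝ) r ×ˢ Ioo (-π) π)) := by
        apply ContinuousOn.aemeasurable ?_ (measurableSet_Ioo.prod measurableSet_Ioo)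
        exact continuous_norm.comp_continuousOn
          (hC1.continuousOn.comp continuous_complex_polarCoord_symm.continuousOn hrectA)
      exact (measurable_fst.aemeasurable.mul (m1.div (m2.mul m3))).aestronglyMeasurable
    · intro p hp
      have habs : ‖Complex.polarCoord.symm p‖ = p.1 := hmapsOpen p hp
      have hp1 : (1:ℝ) < p.1 := hp.1.1
      have hzmem : (Complex.polarCoord.symm p : ℂ) ∈ A := by
        rw [hAdef, mem_setOf_eq, habs]; exact ⟨hp1.le, hp.1.2.le⟩
      have hH : (1:ℝ) ≤ ‖h (Complex.polarCoord.symm p)‖ := hmaps _ hzmem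
      obtain ⟨_, hb⟩ := hMb (Complex.polarCoord.symm p)
        (by rw [habs]; exact hp1) (by rw [habs]; exact hp.1.2)
      rw [hFdef]
      simp only []
      rw [habs, ← mul_div_assoc, mul_div_mul_left _ _ (by linarith : p.1 ≠ 0)]
      rw [abs_div]
      calc |N (Complex.polarCoord.symm p)| / |‖h (Complex.polarCoord.symm p)‖|
          ≤ |N (Complex.polarCoord.symm p)| / 1 :=
            div_le_div_of_nonneg_left (abs_nonneg _) one_pos
              (by rw [abs_of_nonneg (by linarith : (0:ℝ) ≤ ‖h (Complex.polarCoord.symm p)‖)]; exact hH)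
        _ = |N (Complex.polarCoord.symm p)| := div_one _
        _ ≤ M := hb
  rw [polar_annulus r hr F hFint, setIntegral_congr_fun measurableSet_Ioo inner,
    setIntegral_const, Real.volume_real_Ioo, show π - -π = 2 * π by ring,
    max_eq_left (by positivity), smul_eq_mul]

lemma amgm_div (X c s H : ℝ) (hs : 0 < s) (hH : 0 < H) :
    2 * c * (X / (s * H)) - c^2 * (1 / s^2) ≤ X^2 / H^2 := by
  have e1 : X^2 / H^2 - (2 * c * (X / (s * H)) - c^2 * (1 / s^2)) = (X / H - c / s)^2 := by
    field_simp
    ring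
  nlinarith [sq_nonneg (X / H - c / s)]

/-- For a C¹ homeomorphism `h` between the annuli `A₁ = {1 ≤ |z| ≤ r}` and
`A₂ = {1 ≤ |w| ≤ R}` with `|h| = 1` on `|z| = 1` and `|h| = R` on `|z| = r`,
`∬_{A₁} (|h|_N)²/|h|² dz ≥ 2π (log R)²/log r`, where `|h|_N` is the normal
(radial) derivative of `|h|`, i.e. the derivative of `w ↦ |h w|` in the
direction `z/|z|`. -/
theorem stmt12 (r R : ℝ) (hr : 1 < r) (hR : 1 < R) (h : ℂ → ℂ)
    (A₁ A₂ : Set ℂ)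
    (hA₁ : A₁ = {z : ℂ | 1 ≤ ‖z‖ ∧ ‖z‖ ≤ r})
    (hA₂ : A₂ = {w : ℂ | 1 ≤ ‖w‖ ∧ ‖w‖ ≤ R})
    (hC1 : ContDiffOn ℝ 1 h A₁)
    (hbij : Set.BijOn h A₁ A₂)
    (hb1 : ∀ z : ℂ, ‖z‖ = 1 → ‖h z‖ = 1)
    (hb2 : ∀ z : ℂ, ‖z‖ = r → ‖h z‖ = R) :
    2 * Real.pi * (Real.log R) ^ 2 / Real.log r
      ≤ ∫ z in A₁,
          (fderiv ℝ (fun w => ‖h w‖) z (z / (‖z‖ : ℂ))) ^ 2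
            / (‖h z‖) ^ 2 := by
  subst hA₁ hA₂
  set A : Set ℂ := {z : ℂ | 1 ≤ ‖z‖ ∧ ‖z‖ ≤ r} with hAdef
  have hmaps : ∀ z ∈ A, 1 ≤ ‖h z‖ := fun z hz => (hbij.mapsTo hz).1
  have hfun : (fun w => ‖h w‖) = (fun w => ‖h w‖) :=
    funext fun w => rfl
  set N : ℂ → ℝ := fun z => fderiv ℝ (fun w => ‖h w‖) z (z / (‖z‖ : ℂ)) with hNdef
  obtain ⟨M, hM0, hMb, _⟩ := annulus_facts r hr h hC1 hmaps
  have hAmeas : MeasurableSet A := by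
    have : A = (fun z : ℂ => ‖z‖) ⁻¹' Icc 1 r := by ext z; simp [hAdef, mem_Icc]
    rw [this]
    exact (isClosed_Icc.preimage continuous_norm).measurableSet
  have hAfin : volume A < ⊤ :=
    lt_of_le_of_lt (measure_mono (fun z hz => by
      rw [Metric.mem_closedBall, dist_zero_right]; exact hz.2))
      (measure_closedBall_lt_top (x := (0:ℂ)) (r := r))
  haveI : IsFiniteMeasure (volume.restrict A) := by
    constructor; rwa [Measure.restrict_apply_univ]
  -- a.e. membership in the open annulus
  have hAU : ∀ᵐ z ∂(volume.restrict A), 1 < ‖z‖ ∧ ‖z‖ < r := by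
    rw [ae_restrict_iff' hAmeas]
    have hnull : volume (Metric.sphere (0:ℂ) 1 ∪ Metric.sphere (0:ℂ) r) = 0 :=
      measure_union_null (Measure.addHaar_sphere volume _ _) (Measure.addHaar_sphere volume _ _)
    have := measure_eq_zero_iff_ae_notMem.mp hnull
    filter_upwards [this] with z hz hzA
    simp only [mem_union, Metric.mem_sphere, Complex.dist_eq, sub_zero, not_or] at hz
    exact ⟨lt_of_le_of_ne hzA.1 (fun hc => hz.1 hc.symm),
           lt_of_le_of_ne hzA.2 (fun hc => hz.2 hc)⟩
  -- measurability ingredients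
  have hNmeas : Measurable N := by
    have h1 : Measurable (fderiv ℝ (fun w => ‖h w‖)) := measurable_fderiv ℝ _
    have h2 : Measurable fun z : ℂ => z / (‖z‖ : ℂ) := by
      apply Measurable.div measurable_id
      exact Complex.measurable_ofReal.comp continuous_norm.measurable
    exact (isBoundedBilinearMap_apply.continuous.measurable).comp (h1.prodMk h2)
  have mh : AEMeasurable (fun z => ‖h z‖) (volume.restrict A) :=
    (continuous_norm.comp_continuousOn hC1.continuousOn).aemeasurable hAmeas
  have mabs : AEMeasurable (fun z : ℂ => ‖z‖) (volume.restrict A) :=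
    continuous_norm.measurable.aemeasurable
  -- integrability of the three functions
  have hint_main : IntegrableOn (fun z => (N z)^2 / (‖h z‖)^2) A := by
    apply Integrable.mono' (integrable_const (M^2))
    · exact ((hNmeas.aemeasurable.pow_const 2).div (mh.pow_const 2)).aestronglyMeasurable
    · filter_upwards [hAU, ae_restrict_iff' hAmeas |>.2 (Filter.Eventually.of_forall
        (fun z hz => hmaps z hz))] with z hz hH
      obtain ⟨hb_diff, hb⟩ := hMb z hz.1 hz.2
      have hH1 : (1:ℝ) ≤ ‖h z‖ := hH
      rw [Real.norm_eq_abs, abs_div, abs_of_nonneg (sq_nonneg _), abs_of_nonneg (sq_nonneg _)]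
      calc N z ^ 2 / ‖h z‖ ^ 2
          ≤ N z ^ 2 / 1 := div_le_div_of_nonneg_left (sq_nonneg _) one_pos
            (by nlinarith)
        _ = N z ^ 2 := div_one _
        _ = |N z| ^ 2 := (sq_abs _).symm
        _ ≤ M ^ 2 := by nlinarith [abs_nonneg (N z)]
  have hint_cross : IntegrableOn (fun z => N z / (‖z‖ * ‖h z‖)) A := by
    apply Integrable.mono' (integrable_const M)
    · exact (hNmeas.aemeasurable.div (mabs.mul mh)).aestronglyMeasurable
    · filter_upwards [hAU, ae_restrict_iff' hAmeas |>.2 (Filter.Eventually.of_forall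
        (fun z hz => hmaps z hz))] with z hz hH
      obtain ⟨_, hb⟩ := hMb z hz.1 hz.2
      have hd : (1:ℝ) ≤ ‖z‖ * ‖h z‖ := by nlinarith [hz.1.le]
      rw [Real.norm_eq_abs, abs_div]
      calc |N z| / |‖z‖ * ‖h z‖|
          ≤ |N z| / 1 := div_le_div_of_nonneg_left (abs_nonneg _) one_pos
            (by rw [abs_of_nonneg (by linarith : (0:ℝ) ≤ ‖z‖ * ‖h z‖)]; exact hd)
        _ = |N z| := div_one _
        _ ≤ M := hb
  have hint_inv : IntegrableOn (fun z : ℂ => 1 / (‖z‖)^2) A := by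
    apply Integrable.mono' (integrable_const (1:ℝ))
    · exact (aemeasurable_const.div (mabs.pow_const 2)).aestronglyMeasurable
    · rw [ae_restrict_iff' hAmeas]
      apply Filter.Eventually.of_forall
      intro z hz
      rw [Real.norm_eq_abs, abs_div, abs_one, abs_of_nonneg (sq_nonneg _)]
      rw [div_le_one (by nlinarith [hz.1])]
      nlinarith [hz.1]
  -- the AM-GM lower bound
  set c : ℝ := Real.log R / Real.log r with hcdef
  have hlogr : 0 < Real.log r := Real.log_pos hr
  have hlogR : 0 < Real.log R := Real.log_pos hR
  have hmono : ∫ z in A, (2 * c * (N z / (‖z‖ * ‖h z‖))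
        - c^2 * (1 / (‖z‖)^2))
      ≤ ∫ z in A, (N z)^2 / (‖h z‖)^2 := by
    apply setIntegral_mono_on
      ((hint_cross.const_mul (2 * c)).sub (hint_inv.const_mul (c^2))) hint_main hAmeas
    intro z hz
    have h1 : (0:ℝ) < ‖z‖ := by linarith [hz.1]
    have h2 : (0:ℝ) < ‖h z‖ := by linarith [hmaps z hz]
    exact amgm_div (N z) c (‖z‖) (‖h z‖) h1 h2
  have hcalc : ∫ z in A, (2 * c * (N z / (‖z‖ * ‖h z‖))
        - c^2 * (1 / (‖z‖)^2))
      = 2 * c * (2 * π * Real.log R) - c^2 * (2 * π * Real.log r) := by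
    rw [integral_sub (hint_cross.const_mul (2 * c)) (hint_inv.const_mul (c^2)),
      integral_const_mul, integral_const_mul,
      cross_integral r R hr hR h hC1 hmaps hb1 hb2, integral_inv_sq_annulus r hr]
  have hfinal : 2 * π * (Real.log R)^2 / Real.log r
      = 2 * c * (2 * π * Real.log R) - c^2 * (2 * π * Real.log r) := by
    rw [hcdef]
    field_simp
    ring
  rw [hfinal]
  rw [← hcalc]
  exact hmono
end

section
/- Let ρ : [1, r] → ℝ be positive and differentiable with ρ(1) = 1, and let a, b > 0, λ > 1, α with 1 + α/b² > 0. Suppose (a/ρ^(λ-1)) / √(b²/ρ^(2(λ-1)) + α) · ρ'(t) = ρ(t)/t for all t ∈ [1, r], and suppose the denominator (1 + √(1+α/b²))² - t^(2(λ-1)b/a)·α/b² is positive on [1, r]. Then ρ(t) = 2^(1/(λ-1)) (1 + √(1+α/b²))^(1/(λ-1)) t^(b/a) / [(1 + √(1+α/b²))² - t^(2(λ-1)b/a)·α/b²]^(1/(λ-1)) for all t ∈ [1, r]. -/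
lemma alg16 (a b t m κ k p u W T : ℝ) (ha : 0 < a) (ht : 0 < t) (hp : 0 < p)
    (hW : 0 < W) (hW2 : W^2 = 1 + κ*u^2) (hk : k = m*b/a) :
    (p*(b*W)/(a*t)*m*(u/p)*(1+W) - u*(κ*(p*(b*W)/(a*t)*(2*m)*(u^2/p))/(2*W)))/(1+W)^2*T
      + u/(1+W)*(-k*(T/t)) = 0 := by
  have h1 : (1:ℝ)+W ≠ 0 := by positivity
  subst hk
  field_simp
  linear_combination (b*m*u*T) * hW2

theorem stmt16 (a b lam α r : ℝ) (ha : 0 < a) (hb : 0 < b) (hlam : 1 < lam) (hr : 1 < r)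
    (hα : 0 < 1 + α / b ^ 2)
    (ρ : ℝ → ℝ) (hpos : ∀ t ∈ Set.Icc (1:ℝ) r, 0 < ρ t)
    (hdiff : ∀ t ∈ Set.Icc (1:ℝ) r, DifferentiableAt ℝ ρ t)
    (hρ1 : ρ 1 = 1)
    (hode : ∀ t ∈ Set.Icc (1:ℝ) r,
      (a / (ρ t) ^ (lam - 1)) / Real.sqrt (b ^ 2 / (ρ t) ^ (2 * (lam - 1)) + α) * deriv ρ t
        = ρ t / t)
    (hden : ∀ t ∈ Set.Icc (1:ℝ) r,
      0 < (1 + Real.sqrt (1 + α / b ^ 2)) ^ 2 - t ^ (2 * (lam - 1) * b / a) * α / b ^ 2) :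
    ∀ t ∈ Set.Icc (1:ℝ) r,
      ρ t = (2 : ℝ) ^ ((1 : ℝ) / (lam - 1)) *
        (1 + Real.sqrt (1 + α / b ^ 2)) ^ ((1 : ℝ) / (lam - 1)) * t ^ (b / a) /
        ((1 + Real.sqrt (1 + α / b ^ 2)) ^ 2 - t ^ (2 * (lam - 1) * b / a) * α / b ^ 2)
          ^ ((1 : ℝ) / (lam - 1)) := by
  have hm : 0 < lam - 1 := by linarith
  set m := lam - 1 with hmdef
  set κ := α / b ^ 2 with hκdef
  set k := m * b / a with hkdef
  set c := 1 + Real.sqrt (1 + κ) with hcdef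
  have hsqnn : (0:ℝ) ≤ Real.sqrt (1 + κ) := Real.sqrt_nonneg _
  have hc : 0 < c := by rw [hcdef]; linarith
  have hk : 0 < k := by rw [hkdef]; positivity
  -- Step A : clean ODE
  have key : ∀ t ∈ Set.Icc (1:ℝ) r,
      0 < 1 + κ * ρ t ^ (2*m) ∧
      HasDerivAt ρ (ρ t * (b * Real.sqrt (1 + κ * ρ t ^ (2*m))) / (a * t)) t := by
    intro t ht
    obtain ⟨ht1, htr⟩ := ht
    have ht0 : (0:ℝ) < t := lt_of_lt_of_le one_pos ht1
    have hρt := hpos t ⟨ht1, htr⟩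
    have hupos : 0 < ρ t ^ m := Real.rpow_pos_of_pos hρt m
    have hu2pos : 0 < ρ t ^ (2*m) := Real.rpow_pos_of_pos hρt _
    have hrel : b ^ 2 / ρ t ^ (2*m) + α = b^2 * (1 + κ * ρ t ^ (2*m)) / ρ t ^ (2*m) := by
      rw [hκdef]; field_simp
    have hXpos : 0 < 1 + κ * ρ t ^ (2*m) := by
      by_contra hX
      push_neg at hX
      have hz : Real.sqrt (b^2 / ρ t ^ (2*m) + α) = 0 := by
        rw [hrel]
        refine Real.sqrt_eq_zero_of_nonpos ?_
        apply div_nonpos_of_nonpos_of_nonneg _ hu2pos.le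
        nlinarith [sq_nonneg b]
      have h0 := hode t ⟨ht1, htr⟩
      rw [hz] at h0
      simp at h0
      have : 0 < ρ t / t := div_pos hρt ht0
      rw [← h0] at this
      exact lt_irrefl 0 this
    refine ⟨hXpos, ?_⟩
    have hsq : ρ t ^ (2*m) = (ρ t ^ m)^2 := by
      rw [sq, ← Real.rpow_add hρt]; ring_nf
    have hsqrt : Real.sqrt (b^2 / ρ t ^ (2*m) + α)
        = b * Real.sqrt (1 + κ * ρ t ^ (2*m)) / ρ t ^ m := by
      rw [hrel, Real.sqrt_div (by positivity), Real.sqrt_mul (by positivity),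
        Real.sqrt_sq hb.le, hsq, Real.sqrt_sq hupos.le]
    have h0 := hode t ⟨ht1, htr⟩
    rw [hsqrt] at h0
    have hwpos : 0 < Real.sqrt (1 + κ * ρ t ^ (2*m)) := Real.sqrt_pos.2 hXpos
    have hd : deriv ρ t = ρ t * (b * Real.sqrt (1 + κ * ρ t ^ (2*m))) / (a * t) := by
      field_simp at h0 ⊢
      nlinarith [h0]
    have := (hdiff t ⟨ht1, htr⟩).hasDerivAt
    rwa [hd] at this
  -- Step B : N has zero derivative
  set N : ℝ → ℝ := fun s => ρ s ^ m / (1 + Real.sqrt (1 + κ * ρ s ^ (2*m))) * s ^ (-k) with hNdef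
  have hNderiv : ∀ t ∈ Set.Ico (1:ℝ) r, HasDerivWithinAt N 0 (Set.Ici t) t := by
    intro t ht
    have htIcc : t ∈ Set.Icc (1:ℝ) r := ⟨ht.1, ht.2.le⟩
    obtain ⟨hX, hd⟩ := key t htIcc
    have ht0 : (0:ℝ) < t := lt_of_lt_of_le one_pos ht.1
    have hρt := hpos t htIcc
    have hwpos : 0 < Real.sqrt (1 + κ * ρ t ^ (2*m)) := Real.sqrt_pos.2 hX
    have hW2 : Real.sqrt (1 + κ * ρ t ^ (2*m)) ^ 2 = 1 + κ * ρ t ^ (2*m) :=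
      Real.sq_sqrt hX.le
    have hden1 : (1:ℝ) + Real.sqrt (1 + κ * ρ t ^ (2*m)) ≠ 0 := by positivity
    have h1 : HasDerivAt (fun s => ρ s ^ m)
        (ρ t * (b * Real.sqrt (1 + κ * ρ t ^ (2*m))) / (a * t) * m * ρ t ^ (m-1)) t :=
      hd.rpow_const (Or.inl hρt.ne')
    have h2 : HasDerivAt (fun s => 1 + κ * ρ s ^ (2*m))
        (κ * (ρ t * (b * Real.sqrt (1 + κ * ρ t ^ (2*m))) / (a * t) * (2*m) * ρ t ^ (2*m-1))) t :=
      ((hd.rpow_const (Or.inl hρt.ne')).const_mul κ).const_add 1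
    have h3 := h2.sqrt (ne_of_gt hX)
    have h4 := h3.const_add 1
    have h5 := h1.div h4 hden1
    have h6 : HasDerivAt (fun s : ℝ => s ^ (-k)) (-k * t^(-k-1)) t :=
      Real.hasDerivAt_rpow_const (Or.inl ht0.ne')
    have h7 := h5.mul h6
    have hzero : (ρ t * (b * Real.sqrt (1 + κ * ρ t ^ (2*m))) / (a * t) * m * ρ t ^ (m-1) *
          (1 + Real.sqrt (1 + κ * ρ t ^ (2*m))) -
        ρ t ^ m *
          (κ * (ρ t * (b * Real.sqrt (1 + κ * ρ t ^ (2*m))) / (a * t) * (2*m) * ρ t ^ (2*m-1)) /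
            (2 * Real.sqrt (1 + κ * ρ t ^ (2*m))))) /
        (1 + Real.sqrt (1 + κ * ρ t ^ (2*m))) ^ 2 * t ^ (-k) +
        ρ t ^ m / (1 + Real.sqrt (1 + κ * ρ t ^ (2*m))) * (-k * t ^ (-k-1)) = 0 := by
      have hrm1 : ρ t ^ (m-1) = ρ t ^ m / ρ t := Real.rpow_sub_one hρt.ne' m
      have hr2m1 : ρ t ^ (2*m-1) = ρ t ^ (2*m) / ρ t := Real.rpow_sub_one hρt.ne' _
      have htk : t ^ (-k-1) = t ^ (-k) / t := Real.rpow_sub_one ht0.ne' _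
      have hsq : ρ t ^ (2*m) = (ρ t ^ m)^2 := by
        rw [sq, ← Real.rpow_add hρt]; ring_nf
      rw [hsq] at hwpos hW2
      rw [hrm1, hr2m1, htk, hsq]
      exact alg16 a b t m κ k (ρ t) (ρ t ^ m) _ _ ha ht0 hρt hwpos hW2 hkdef
    have h8 : HasDerivAt N 0 t := by
      rw [hNdef]
      exact h7.congr_deriv hzero
    exact h8.hasDerivWithinAt
  -- Step C : continuity and constancy
  have hρcont : ContinuousOn ρ (Set.Icc 1 r) := fun x hx =>
    (hdiff x hx).continuousAt.continuousWithinAt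
  have hNcont : ContinuousOn N (Set.Icc 1 r) := by
    rw [hNdef]
    apply ContinuousOn.mul
    · apply ContinuousOn.div
      · exact hρcont.rpow_const (fun x hx => Or.inr hm.le)
      · exact continuousOn_const.add (Real.continuous_sqrt.comp_continuousOn
          (continuousOn_const.add (continuousOn_const.mul
            (hρcont.rpow_const (fun x hx => Or.inr (by positivity))))))
      · intro x hx
        positivity
    · exact continuousOn_id.rpow_const
        (fun x hx => Or.inl (lt_of_lt_of_le one_pos hx.1).ne')
  have hNc : ∀ y ∈ Set.Icc (1:ℝ) r, N y = N 1 :=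
    eq_of_has_deriv_right_eq (f' := fun _ => (0:ℝ)) hNderiv
      (fun x _ => hasDerivWithinAt_const _ _ _) hNcont continuousOn_const rfl
  have hN1 : N 1 = 1 / c := by
    rw [hNdef]
    simp [hρ1, Real.one_rpow, hcdef]
  -- Step D : solve for ρ
  intro t ht
  have ht0 : (0:ℝ) < t := lt_of_lt_of_le one_pos ht.1
  have hρt := hpos t ht
  obtain ⟨hX, -⟩ := key t ht
  have hNt : ρ t ^ m / (1 + Real.sqrt (1 + κ * ρ t ^ (2*m))) * t ^ (-k) = 1/c :=
    (hNc t ht).trans hN1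
  set u := ρ t ^ m with hudef
  have hupos : 0 < u := Real.rpow_pos_of_pos hρt m
  have hsq : ρ t ^ (2*m) = u^2 := by rw [hudef, sq, ← Real.rpow_add hρt]; ring_nf
  rw [hsq] at hNt hX
  set W := Real.sqrt (1 + κ * u^2) with hWdef
  have hWpos : 0 < W := Real.sqrt_pos.2 hX
  have h1W : (0:ℝ) < 1 + W := by positivity
  have hW2 : W^2 = 1 + κ * u^2 := Real.sq_sqrt hX.le
  set T := t ^ k with hTdef
  have hTpos : 0 < T := Real.rpow_pos_of_pos ht0 k
  have hTinv : t ^ (-k) = T⁻¹ := by rw [hTdef, Real.rpow_neg ht0.le]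
  rw [hTinv] at hNt
  have hcu : c * u = (1+W) * T := by
    field_simp at hNt
    linear_combination hNt
  have h2k : t ^ (2*m*b/a) = T^2 := by
    have h : (2:ℝ)*m*b/a = k + k := by rw [hkdef]; ring
    rw [h, Real.rpow_add ht0, hTdef, sq]
  have hkey : u * (c^2 - κ*T^2) = 2*c*T := by
    apply mul_left_cancel₀ hupos.ne'
    linear_combination (c*u + (1+W)*T - 2*T)*hcu + T^2*hW2
  have hgd : c^2 - t^(2*m*b/a)*α/b^2 = c^2 - κ*T^2 := by
    rw [h2k, hκdef]; ring
  have hD2 : 0 < c^2 - κ*T^2 := by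
    have h := hden t ht
    rw [hgd] at h
    exact h
  have hu_eq : u = 2*c*T / (c^2-κ*T^2) := by
    rw [eq_div_iff hD2.ne']
    exact hkey
  have hρu : u ^ ((1:ℝ)/m) = ρ t := by
    rw [hudef, ← Real.rpow_mul hρt.le, mul_one_div, div_self hm.ne', Real.rpow_one]
  have hsplit : (2*c*T/(c^2-κ*T^2)) ^ ((1:ℝ)/m)
      = 2^((1:ℝ)/m)*c^((1:ℝ)/m)*T^((1:ℝ)/m)/(c^2-κ*T^2)^((1:ℝ)/m) := by
    rw [Real.div_rpow (by positivity) hD2.le, Real.mul_rpow (by positivity) hTpos.le,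
      Real.mul_rpow (by norm_num) hc.le]
  have hT1m : T ^ ((1:ℝ)/m) = t ^ (b/a) := by
    rw [hTdef, ← Real.rpow_mul ht0.le]
    congr 1
    rw [hkdef]
    field_simp
  rw [hgd, ← hT1m, ← hsplit, ← hu_eq, hρu]
end

section
/- Let a, b > 0, λ > 1, R > 1, and let α ≥ -b²/R^(2(λ-1)). Define r by r = [R^(λ-1)(1 + √(1+α/b²)) / (1 + √(1 + R^(2λ-2)α/b²))]^((1/(λ-1))·(a/b)). Then R = 2^(1/(λ-1)) (1 + √(1+α/b²))^(1/(λ-1)) r^(b/a) / [(1 + √(1+α/b²))² - r^(2(λ-1)b/a)·α/b²]^(1/(λ-1)). -/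
set_option maxHeartbeats 1000000


theorem stmt17 (a b lam R α r : ℝ) (ha : 0 < a) (hb : 0 < b) (hlam : 1 < lam) (hR : 1 < R)
    (hα : -b ^ 2 / R ^ (2 * (lam - 1)) ≤ α)
    (hrdef : r = (R ^ (lam - 1) * (1 + Real.sqrt (1 + α / b ^ 2)) /
        (1 + Real.sqrt (1 + R ^ (2 * lam - 2) * α / b ^ 2))) ^ ((1 / (lam - 1)) * (a / b))) :
    R = (2 : ℝ) ^ ((1 : ℝ) / (lam - 1)) *
        (1 + Real.sqrt (1 + α / b ^ 2)) ^ ((1 : ℝ) / (lam - 1)) * r ^ (b / a) /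
        ((1 + Real.sqrt (1 + α / b ^ 2)) ^ 2 - r ^ (2 * (lam - 1) * b / a) * α / b ^ 2)
          ^ ((1 : ℝ) / (lam - 1)) := by
  have hRp : (0:ℝ) < R := lt_trans one_pos hR
  have hl1 : (0:ℝ) < lam - 1 := by linarith
  have hb2 : (0:ℝ) < b ^ 2 := by positivity
  set P : ℝ := R ^ (2 * (lam - 1)) with hPdef
  have hP1 : 1 < P := by
    rw [hPdef]
    exact (Real.one_lt_rpow_iff_of_pos hRp).mpr (Or.inl ⟨hR, by linarith⟩)
  have hP0 : (0:ℝ) < P := lt_trans one_pos hP1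
  have hPe : R ^ (2 * lam - 2) = P := by rw [hPdef]; ring_nf
  have hbb : -b ^ 2 ≤ α := by
    refine le_trans ?_ hα
    rw [le_div_iff₀ hP0]
    nlinarith
  have hc : (0:ℝ) ≤ 1 + α / b ^ 2 := by
    have : -1 ≤ α / b ^ 2 := by rw [le_div_iff₀ hb2]; linarith
    linarith
  have hct : (0:ℝ) ≤ 1 + P * α / b ^ 2 := by
    have h1 : -b ^ 2 ≤ α * P := by
      have := (div_le_iff₀ hP0).mp hα
      linarith
    have : -1 ≤ P * α / b ^ 2 := by rw [le_div_iff₀ hb2]; nlinarith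
    linarith
  set s : ℝ := Real.sqrt (1 + α / b ^ 2) with hsdef
  set t : ℝ := Real.sqrt (1 + P * α / b ^ 2) with htdef
  have hs0 : 0 ≤ s := Real.sqrt_nonneg _
  have ht0 : 0 ≤ t := Real.sqrt_nonneg _
  have hs2 : s ^ 2 = 1 + α / b ^ 2 := Real.sq_sqrt hc
  have ht2 : t ^ 2 = 1 + P * α / b ^ 2 := Real.sq_sqrt hct
  set K : ℝ := R ^ (lam - 1) with hKdef
  have hK0 : (0:ℝ) < K := Real.rpow_pos_of_pos hRp _
  have hK2 : K ^ 2 = P := by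
    rw [hKdef, hPdef, ← Real.rpow_natCast (R ^ (lam - 1)) 2, ← Real.rpow_mul hRp.le]
    norm_num
    ring_nf
  set X : ℝ := K * (1 + s) / (1 + t) with hXdef
  have hX0 : (0:ℝ) < X := by
    apply div_pos (by positivity) (by linarith)
  have hr : r = X ^ ((1 / (lam - 1)) * (a / b)) := by
    rw [hrdef, hPe]
  have hrba : r ^ (b / a) = X ^ ((1:ℝ) / (lam - 1)) := by
    rw [hr, ← Real.rpow_mul hX0.le]
    congr 1
    field_simp
  have hr2 : r ^ (2 * (lam - 1) * b / a) = X ^ 2 := by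
    rw [hr, ← Real.rpow_mul hX0.le, ← Real.rpow_natCast X 2]
    congr 1
    push_cast
    field_simp
  have ht1 : (0:ℝ) < 1 + t := by linarith
  have hD : (1 + s) ^ 2 - X ^ 2 * α / b ^ 2 = (1 + s) ^ 2 * 2 / (1 + t) := by
    have hXsq : X ^ 2 * (α / b ^ 2) = (1 + s) ^ 2 * (t ^ 2 - 1) / (1 + t) ^ 2 := by
      rw [hXdef, ht2]
      field_simp
      linear_combination α * hK2
    have h : X ^ 2 * α / b ^ 2 = X ^ 2 * (α / b ^ 2) := by ring
    rw [h, hXsq]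
    field_simp
    ring
  rw [hrba, hr2, hD]
  have hq : (lam - 1) * ((1:ℝ) / (lam - 1)) = 1 := by field_simp
  rw [← Real.mul_rpow (by norm_num) (by linarith), ← Real.mul_rpow (by positivity) hX0.le,
    ← Real.div_rpow (by positivity) (by positivity)]
  have hAB : 2 * (1 + s) * X / ((1 + s) ^ 2 * 2 / (1 + t)) = K := by
    rw [hXdef]
    field_simp
  rw [hAB, hKdef, ← Real.rpow_mul hRp.le, hq, Real.rpow_one]
end
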